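/- arXiv:1907.03603 — 6 statements merged into one kernel-verified Lean document; each statement's English description precedes it below -/
import Mathlib

section
/- Let Z : ℝ³ → [0,∞) be measurable and satisfy W⁰(ξ) + (18/((2π)³ |ξ|)) ∫_{ℝ³} Z(ξ−η) Z(η) dη ≤ Z(ξ) for a.e. ξ, where W⁰ ≥ 0 is measurable. Define W⁽⁰⁾(t,ξ) = e^(−t|ξ|²) W⁰(ξ) and W⁽ⁿ⁺¹⁾ = W⁽⁰⁾ + B₀(W⁽ⁿ⁾, W⁽ⁿ⁾), with B₀(W,V)(t,ξ) = (18/(2π)³) ∫₀ᵗ e^(−(t−s)|ξ|²) |ξ| ∫ W(s,η) V(s,ξ−η) dη ds. Then for every n ≥ 0, t > 0 and ξ, W⁽ⁿ⁾(t,ξ) ≤ Z(ξ). -/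
open MeasureTheory Set Filter
open scoped ENNReal

noncomputable section

/-- The bilinear operator `B₀` of the cheap Fourier–Navier–Stokes equation. -/
def cheapB (W V : ℝ → EuclideanSpace ℝ (Fin 3) → ℝ≥0∞) (t : ℝ)
    (ξ : EuclideanSpace ℝ (Fin 3)) : ℝ≥0∞ :=
  ENNReal.ofReal (18 / (2 * Real.pi) ^ 3) *
    ∫⁻ s in Set.Ioc (0 : ℝ) t,
      ENNReal.ofReal (Real.exp (-((t - s) * ‖ξ‖ ^ 2)) * ‖ξ‖) *
        ∫⁻ η, W s η * V s (ξ - η)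

/-- The Picard iterates `W⁽ⁿ⁾`. -/
def cheapIter (W0 : EuclideanSpace ℝ (Fin 3) → ℝ≥0∞) :
    ℕ → ℝ → EuclideanSpace ℝ (Fin 3) → ℝ≥0∞
  | 0 => fun t ξ => ENNReal.ofReal (Real.exp (-(t * ‖ξ‖ ^ 2))) * W0 ξ
  | n + 1 => fun t ξ =>
      cheapIter W0 0 t ξ + cheapB (cheapIter W0 n) (cheapIter W0 n) t ξ

/-- Real-variable computation: `∫₀ᵗ e^{-(t-s)a} ds = (1 - e^{-ta})/a`. -/
lemma cheap_exp_integral (a t : ℝ) (ha : 0 < a) (_ht : 0 < t) :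
    ∫ s in (0:ℝ)..t, Real.exp (-((t - s) * a)) = (1 - Real.exp (-(t * a))) / a := by
  have hF : ∀ s ∈ Set.uIcc (0:ℝ) t,
      HasDerivAt (fun s : ℝ => Real.exp (-((t - s) * a)) / a)
        (Real.exp (-((t - s) * a))) s := by
    intro s _
    have h1 : HasDerivAt (fun s : ℝ => t - s) (-1) s :=
      (hasDerivAt_id s).const_sub t
    have h2 : HasDerivAt (fun s : ℝ => (t - s) * a) (-1 * a) s := h1.mul_const a
    have h3 : HasDerivAt (fun s : ℝ => -((t - s) * a)) (-(-1 * a)) s := h2.neg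
    have h4 := h3.exp
    have h5 := h4.div_const a
    convert h5 using 1
    · rfl
    · rfl
    · rw [neg_mul, one_mul, neg_neg, mul_div_assoc, div_self ha.ne', mul_one]
  have hcont : Continuous fun s : ℝ => Real.exp (-((t - s) * a)) := by continuity
  rw [intervalIntegral.integral_eq_sub_of_hasDerivAt hF
    (hcont.intervalIntegrable 0 t)]
  simp only [sub_self, zero_mul, neg_zero, Real.exp_zero, sub_zero]
  ring

/-- The key time-integral bound. -/
lemma cheap_time_integral (r t : ℝ) (hr : 0 < r) (ht : 0 < t) :
    ∫⁻ s in Set.Ioc (0:ℝ) t, ENNReal.ofReal (Real.exp (-((t - s) * r ^ 2)) * r) ≤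
      (ENNReal.ofReal r)⁻¹ := by
  set a := r ^ 2 with ha_def
  have ha : 0 < a := by positivity
  have hcont : Continuous fun s : ℝ => Real.exp (-((t - s) * a)) := by continuity
  have hint : IntegrableOn (fun s : ℝ => Real.exp (-((t - s) * a))) (Set.Ioc 0 t) :=
    (hcont.integrableOn_Icc (a := 0) (b := t)).mono_set Set.Ioc_subset_Icc_self
  have heq : ∫⁻ s in Set.Ioc (0:ℝ) t, ENNReal.ofReal (Real.exp (-((t - s) * a))) =
      ENNReal.ofReal (∫ s in Set.Ioc (0:ℝ) t, Real.exp (-((t - s) * a))) := by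
    rw [ofReal_integral_eq_lintegral_ofReal hint
      (Filter.Eventually.of_forall fun s => (Real.exp_pos _).le)]
  have hval : (∫ s in Set.Ioc (0:ℝ) t, Real.exp (-((t - s) * a))) =
      (1 - Real.exp (-(t * a))) / a := by
    rw [← intervalIntegral.integral_of_le ht.le]
    exact cheap_exp_integral a t ha ht
  calc ∫⁻ s in Set.Ioc (0:ℝ) t, ENNReal.ofReal (Real.exp (-((t - s) * a)) * r)
      = ∫⁻ s in Set.Ioc (0:ℝ) t,
          ENNReal.ofReal (Real.exp (-((t - s) * a))) * ENNReal.ofReal r := by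
        simp_rw [ENNReal.ofReal_mul (Real.exp_pos _).le]
    _ = (∫⁻ s in Set.Ioc (0:ℝ) t, ENNReal.ofReal (Real.exp (-((t - s) * a)))) *
          ENNReal.ofReal r := by
        rw [lintegral_mul_const]
        exact (ENNReal.measurable_ofReal.comp (by fun_prop))
    _ = ENNReal.ofReal ((1 - Real.exp (-(t * a))) / a) * ENNReal.ofReal r := by
        rw [heq, hval]
    _ ≤ ENNReal.ofReal (1 / a) * ENNReal.ofReal r := by
        gcongr
        linarith [(Real.exp_pos (-(t * a))).le]
    _ = ENNReal.ofReal (1 / a * r) := (ENNReal.ofReal_mul (by positivity)).symm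
    _ = ENNReal.ofReal r⁻¹ := by
        congr 1
        field_simp [ha_def]
        ring
    _ = (ENNReal.ofReal r)⁻¹ := ENNReal.ofReal_inv_of_pos hr

theorem stationary_supersolution_dominates
    (W0 Z : EuclideanSpace ℝ (Fin 3) → ℝ≥0∞)
    (hW0 : Measurable W0) (hZ : Measurable Z)
    (hsuper : ∀ᵐ ξ, W0 ξ +
      ENNReal.ofReal (18 / (2 * Real.pi) ^ 3) * (ENNReal.ofReal ‖ξ‖)⁻¹ *
        ∫⁻ η, Z (ξ - η) * Z η ≤ Z ξ) :
    ∀ n : ℕ, ∀ t : ℝ, 0 < t → ∀ᵐ ξ, cheapIter W0 n t ξ ≤ Z ξ := by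
  have hW0Z : ∀ᵐ ξ, W0 ξ ≤ Z ξ := by
    filter_upwards [hsuper] with ξ h
    exact le_trans le_self_add h
  have hbase : ∀ t : ℝ, 0 < t → ∀ ξ, cheapIter W0 0 t ξ ≤ W0 ξ := by
    intro t ht ξ
    simp only [cheapIter]
    calc ENNReal.ofReal (Real.exp (-(t * ‖ξ‖ ^ 2))) * W0 ξ ≤ 1 * W0 ξ := by
          gcongr
          rw [ENNReal.ofReal_le_one]
          exact Real.exp_le_one_iff.mpr (neg_nonpos.mpr (by positivity))
      _ = W0 ξ := one_mul _
  intro n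
  induction n with
  | zero =>
    intro t ht
    filter_upwards [hW0Z] with ξ h
    exact le_trans (hbase t ht ξ) h
  | succ n ih =>
    intro t ht
    -- a.e. bound on the convolution, valid for every ξ once s > 0
    have hconv : ∀ s : ℝ, 0 < s → ∀ ξ,
        (∫⁻ η, cheapIter W0 n s η * cheapIter W0 n s (ξ - η)) ≤
          ∫⁻ η, Z (ξ - η) * Z η := by
      intro s hs ξ
      have h1 := ih s hs
      have h2 : ∀ᵐ η : EuclideanSpace ℝ (Fin 3),
          cheapIter W0 n s (ξ - η) ≤ Z (ξ - η) :=
        (Measure.measurePreserving_sub_left volume ξ).quasiMeasurePreserving.ae h1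
      calc (∫⁻ η, cheapIter W0 n s η * cheapIter W0 n s (ξ - η)) ≤
            ∫⁻ η, Z η * Z (ξ - η) := by
            refine lintegral_mono_ae ?_
            filter_upwards [h1, h2] with η ha hb
            exact mul_le_mul' ha hb
        _ = ∫⁻ η, Z (ξ - η) * Z η := lintegral_congr fun η => mul_comm _ _
    have h0 : ∀ᵐ ξ : EuclideanSpace ℝ (Fin 3), ξ ≠ 0 := by
      refine ae_iff.mpr ?_
      have : {ξ : EuclideanSpace ℝ (Fin 3) | ¬ ξ ≠ 0} = {0} := by
        ext ξ; simp
      rw [this]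
      exact measure_singleton 0
    filter_upwards [hsuper, h0] with ξ hsup hξ0
    have hr : (0:ℝ) < ‖ξ‖ := norm_pos_iff.mpr hξ0
    have hBle : cheapB (cheapIter W0 n) (cheapIter W0 n) t ξ ≤
        ENNReal.ofReal (18 / (2 * Real.pi) ^ 3) * (ENNReal.ofReal ‖ξ‖)⁻¹ *
          ∫⁻ η, Z (ξ - η) * Z η := by
      rw [cheapB, mul_assoc]
      gcongr
      calc (∫⁻ s in Set.Ioc (0:ℝ) t,
            ENNReal.ofReal (Real.exp (-((t - s) * ‖ξ‖ ^ 2)) * ‖ξ‖) *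
              ∫⁻ η, cheapIter W0 n s η * cheapIter W0 n s (ξ - η)) ≤
          ∫⁻ s in Set.Ioc (0:ℝ) t,
            ENNReal.ofReal (Real.exp (-((t - s) * ‖ξ‖ ^ 2)) * ‖ξ‖) *
              ∫⁻ η, Z (ξ - η) * Z η := by
            refine setLIntegral_mono
              ((ENNReal.measurable_ofReal.comp (by fun_prop)).mul_const _) ?_
            intro s hs
            exact mul_le_mul_right (hconv s hs.1 ξ) _
        _ = (∫⁻ s in Set.Ioc (0:ℝ) t,
              ENNReal.ofReal (Real.exp (-((t - s) * ‖ξ‖ ^ 2)) * ‖ξ‖)) *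
              ∫⁻ η, Z (ξ - η) * Z η := by
            rw [lintegral_mul_const]
            exact ENNReal.measurable_ofReal.comp (by fun_prop)
        _ ≤ (ENNReal.ofReal ‖ξ‖)⁻¹ * ∫⁻ η, Z (ξ - η) * Z η := by
            gcongr
            exact cheap_time_integral ‖ξ‖ t hr ht
    calc cheapIter W0 (n + 1) t ξ =
          cheapIter W0 0 t ξ + cheapB (cheapIter W0 n) (cheapIter W0 n) t ξ := by simp only [cheapIter]
      _ ≤ W0 ξ + ENNReal.ofReal (18 / (2 * Real.pi) ^ 3) *
            (ENNReal.ofReal ‖ξ‖)⁻¹ * ∫⁻ η, Z (ξ - η) * Z η :=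
          add_le_add (hbase t ht ξ) hBle
      _ ≤ Z ξ := hsup
end
end

section
/- Let E = {Z measurable on ℝ³ : ‖Z‖_E := ess sup_ξ |ξ|² |Z(ξ)| < ∞}. Then there is a constant C such that for all Z, V ∈ E, the function ξ ↦ |ξ|^(−1) (|Z| ∗ |V|)(ξ) belongs to E with ‖ |ξ|^(−1)(|Z|∗|V|) ‖_E ≤ C ‖Z‖_E ‖V‖_E. -/
set_option maxHeartbeats 1000000


open MeasureTheory
open scoped ENNReal NNReal

section LJSaux

open Metric Set

local notation "E3" => EuclideanSpace ℝ (Fin 3)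

private lemma LJS_vol_ball {s : ℝ} (hs : 0 ≤ s) :
    volume (ball (0:E3) s) = ENNReal.ofReal (s^3) * volume (ball (0:E3) 1) := by
  have := Measure.addHaar_ball (volume : Measure E3) 0 hs
  rwa [finrank_euclideanSpace_fin] at this

private lemma LJS_meas_inv_sq :
    Measurable fun η : E3 => (ENNReal.ofReal (‖η‖^2))⁻¹ :=
  ((measurable_norm.pow_const 2).ennreal_ofReal).inv

private lemma LJS_geom_sum {c : ℝ} (hc : 0 ≤ c) (v : ℝ≥0∞) :
    ∑' k : ℕ, ENNReal.ofReal (c * (1/2)^k) * v = 2 * ENNReal.ofReal c * v := by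
  have h12 : ENNReal.ofReal (1/2 : ℝ) = 2⁻¹ := by
    rw [one_div, ENNReal.ofReal_inv_of_pos (by norm_num)]
    norm_num
  calc ∑' k : ℕ, ENNReal.ofReal (c * (1/2)^k) * v
      = (∑' k : ℕ, ENNReal.ofReal c * (2⁻¹)^k) * v := by
        rw [ENNReal.tsum_mul_right]
        congr 1
        refine tsum_congr fun k => ?_
        rw [ENNReal.ofReal_mul hc, ← h12, ← ENNReal.ofReal_pow (by norm_num)]
    _ = 2 * ENNReal.ofReal c * v := by
        rw [ENNReal.tsum_mul_left, ENNReal.tsum_geometric, ENNReal.one_sub_inv_two, inv_inv,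
          mul_comm (ENNReal.ofReal c) 2]

/-- Dyadic bound: ∫_{ball 0 r} ‖η‖^{-2} ≤ 8 v r. -/
private lemma LJS_inv_sq_ball {r : ℝ} (hr : 0 < r) :
    ∫⁻ η in ball (0:E3) r, (ENNReal.ofReal (‖η‖^2))⁻¹ ∂volume
      ≤ 8 * ENNReal.ofReal r * volume (ball (0:E3) 1) := by
  set v := volume (ball (0:E3) 1) with hv
  set A : ℕ → Set E3 := fun k => {η | r / 2^(k+1) ≤ ‖η‖} ∩ ball 0 (r / 2^k) with hA
  have hcover : ball (0:E3) r \ {0} ⊆ ⋃ k, A k := by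
    rintro η ⟨hη, hη0⟩
    have hn : 0 < ‖η‖ := norm_pos_iff.2 (by simpa using hη0)
    have hex : ∃ k : ℕ, r / 2^(k+1) ≤ ‖η‖ := by
      obtain ⟨k, hk⟩ := pow_unbounded_of_one_lt (r / ‖η‖) (one_lt_two (α := ℝ))
      exact ⟨k, by
        rw [div_le_iff₀ (by positivity)]
        rw [div_lt_iff₀ hn] at hk
        calc r ≤ ‖η‖ * 2^k * 1 := by linarith
          _ ≤ ‖η‖ * 2^(k+1) := by
              rw [mul_one, pow_succ, ← mul_assoc]
              nlinarith [pow_pos (two_pos (α := ℝ)) k]⟩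
    classical
    refine mem_iUnion.2 ⟨Nat.find hex, Nat.find_spec hex, ?_⟩
    rw [mem_ball, dist_zero_right]
    rcases Nat.eq_zero_or_pos (Nat.find hex) with h0 | hpos
    · rw [h0]
      simpa using mem_ball_zero_iff.1 hη
    · obtain ⟨j, hj⟩ := Nat.exists_eq_succ_of_ne_zero hpos.ne'
      have := Nat.find_min hex (m := j) (by omega)
      rw [hj]
      push_neg at this
      simpa [pow_succ] using this
  have hterm : ∀ k : ℕ, ∫⁻ η in A k, (ENNReal.ofReal (‖η‖^2))⁻¹ ∂volume
      ≤ ENNReal.ofReal (4 * r * (1/2)^k) * v := by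
    intro k
    have h2k : (0:ℝ) < 2^k := by positivity
    have h2k1 : (0:ℝ) < 2^(k+1) := by positivity
    have hrk : (0:ℝ) < r / 2^(k+1) := by positivity
    have hb : ∀ η ∈ A k, (ENNReal.ofReal (‖η‖^2))⁻¹
        ≤ (ENNReal.ofReal ((r / 2^(k+1))^2))⁻¹ := by
      rintro η ⟨h1, -⟩
      exact ENNReal.inv_le_inv.2 (ENNReal.ofReal_le_ofReal (by
        have : r / 2^(k+1) ≤ ‖η‖ := h1
        nlinarith))
    calc ∫⁻ η in A k, (ENNReal.ofReal (‖η‖^2))⁻¹ ∂volume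
        ≤ ∫⁻ _ in A k, (ENNReal.ofReal ((r / 2^(k+1))^2))⁻¹ ∂volume :=
          setLIntegral_mono measurable_const hb
      _ = (ENNReal.ofReal ((r / 2^(k+1))^2))⁻¹ * volume (A k) := setLIntegral_const _ _
      _ ≤ (ENNReal.ofReal ((r / 2^(k+1))^2))⁻¹ * (ENNReal.ofReal ((r / 2^k)^3) * v) := by
          gcongr
          rw [← LJS_vol_ball (by positivity)]
          exact measure_mono inter_subset_right
      _ = ENNReal.ofReal (((r / 2^(k+1))^2)⁻¹ * (r / 2^k)^3) * v := by
          rw [← ENNReal.ofReal_inv_of_pos (by positivity), ← mul_assoc,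
            ← ENNReal.ofReal_mul (by positivity)]
      _ ≤ ENNReal.ofReal (4 * r * (1/2)^k) * v := by
          have : ((r / 2^(k+1))^2)⁻¹ * (r / 2^k)^3 = 4 * r * (1/2)^k := by
            rw [pow_succ, one_div, inv_pow]
            field_simp
            ring
          rw [this]
  calc ∫⁻ η in ball (0:E3) r, (ENNReal.ofReal (‖η‖^2))⁻¹ ∂volume
      = ∫⁻ η in ball (0:E3) r \ {0}, (ENNReal.ofReal (‖η‖^2))⁻¹ ∂volume := by
        refine (setLIntegral_congr ?_).symm
        refine diff_ae_eq_self.2 (measure_mono_null ?_ (measure_singleton 0))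
        exact Set.inter_subset_right
    _ ≤ ∫⁻ η in ⋃ k, A k, (ENNReal.ofReal (‖η‖^2))⁻¹ ∂volume := lintegral_mono_set hcover
    _ ≤ ∑' k, ∫⁻ η in A k, (ENNReal.ofReal (‖η‖^2))⁻¹ ∂volume := lintegral_iUnion_le _ _
    _ ≤ ∑' k, ENNReal.ofReal (4 * r * (1/2)^k) * v := ENNReal.tsum_le_tsum hterm
    _ = 2 * ENNReal.ofReal (4 * r) * v := LJS_geom_sum (by positivity) v
    _ = 8 * ENNReal.ofReal r * v := by
        rw [ENNReal.ofReal_mul (by norm_num)]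
        norm_num [← mul_assoc]

/-- Dyadic bound: ∫_{(ball 0 r)ᶜ} ‖η‖^{-4} ≤ 16 v / r. -/
private lemma LJS_inv_p4_compl {r : ℝ} (hr : 0 < r) :
    ∫⁻ η in (ball (0:E3) r)ᶜ, (ENNReal.ofReal (‖η‖^4))⁻¹ ∂volume
      ≤ 16 * ENNReal.ofReal r⁻¹ * volume (ball (0:E3) 1) := by
  set v := volume (ball (0:E3) 1) with hv
  set B : ℕ → Set E3 := fun k => {η | r * 2^k ≤ ‖η‖} ∩ ball 0 (r * 2^(k+1)) with hB
  have hcover : (ball (0:E3) r)ᶜ ⊆ ⋃ k, B k := by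
    intro η hη
    have hn : r ≤ ‖η‖ := by
      have := hη
      rw [mem_compl_iff, mem_ball, dist_zero_right, not_lt] at this
      exact this
    have hex : ∃ k : ℕ, ‖η‖ < r * 2^(k+1) := by
      obtain ⟨k, hk⟩ := pow_unbounded_of_one_lt (‖η‖ / r) (one_lt_two (α := ℝ))
      refine ⟨k, ?_⟩
      rw [div_lt_iff₀ hr] at hk
      calc ‖η‖ < 2^k * r := hk
        _ ≤ r * 2^(k+1) := by
            rw [pow_succ]
            nlinarith [pow_pos (two_pos (α := ℝ)) k]
    classical
    refine mem_iUnion.2 ⟨Nat.find hex, ?_, by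
      simpa [mem_ball, dist_zero_right] using Nat.find_spec hex⟩
    rcases Nat.eq_zero_or_pos (Nat.find hex) with h0 | hpos
    · rw [h0]; simpa using hn
    · obtain ⟨j, hj⟩ := Nat.exists_eq_succ_of_ne_zero hpos.ne'
      have := Nat.find_min hex (m := j) (by omega)
      push_neg at this
      rw [hj]
      simpa using this
  have hterm : ∀ k : ℕ, ∫⁻ η in B k, (ENNReal.ofReal (‖η‖^4))⁻¹ ∂volume
      ≤ ENNReal.ofReal (8 * r⁻¹ * (1/2)^k) * v := by
    intro k
    have h2k : (0:ℝ) < 2^k := by positivity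
    have hb : ∀ η ∈ B k, (ENNReal.ofReal (‖η‖^4))⁻¹
        ≤ (ENNReal.ofReal ((r * 2^k)^4))⁻¹ := by
      rintro η ⟨h1, -⟩
      refine ENNReal.inv_le_inv.2 (ENNReal.ofReal_le_ofReal ?_)
      have h1' : r * 2^k ≤ ‖η‖ := h1
      have h0 : (0:ℝ) ≤ r * 2^k := by positivity
      exact pow_le_pow_left₀ h0 h1' 4
    calc ∫⁻ η in B k, (ENNReal.ofReal (‖η‖^4))⁻¹ ∂volume
        ≤ ∫⁻ _ in B k, (ENNReal.ofReal ((r * 2^k)^4))⁻¹ ∂volume :=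
          setLIntegral_mono measurable_const hb
      _ = (ENNReal.ofReal ((r * 2^k)^4))⁻¹ * volume (B k) := setLIntegral_const _ _
      _ ≤ (ENNReal.ofReal ((r * 2^k)^4))⁻¹ * (ENNReal.ofReal ((r * 2^(k+1))^3) * v) := by
          gcongr
          rw [← LJS_vol_ball (by positivity)]
          exact measure_mono inter_subset_right
      _ = ENNReal.ofReal (((r * 2^k)^4)⁻¹ * (r * 2^(k+1))^3) * v := by
          rw [← ENNReal.ofReal_inv_of_pos (by positivity), ← mul_assoc,
            ← ENNReal.ofReal_mul (by positivity)]
      _ ≤ ENNReal.ofReal (8 * r⁻¹ * (1/2)^k) * v := by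
          have : ((r * 2^k)^4)⁻¹ * (r * 2^(k+1))^3 = 8 * r⁻¹ * (1/2)^k := by
            rw [pow_succ, one_div, inv_pow]
            field_simp
            ring
          rw [this]
  calc ∫⁻ η in (ball (0:E3) r)ᶜ, (ENNReal.ofReal (‖η‖^4))⁻¹ ∂volume
      ≤ ∫⁻ η in ⋃ k, B k, (ENNReal.ofReal (‖η‖^4))⁻¹ ∂volume := lintegral_mono_set hcover
    _ ≤ ∑' k, ∫⁻ η in B k, (ENNReal.ofReal (‖η‖^4))⁻¹ ∂volume := lintegral_iUnion_le _ _
    _ ≤ ∑' k, ENNReal.ofReal (8 * r⁻¹ * (1/2)^k) * v := ENNReal.tsum_le_tsum hterm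
    _ = 2 * ENNReal.ofReal (8 * r⁻¹) * v := LJS_geom_sum (by positivity) v
    _ = 16 * ENNReal.ofReal r⁻¹ * v := by
        rw [ENNReal.ofReal_mul (by norm_num)]
        norm_num [← mul_assoc]

/-- The convolution kernel bound: ∫ ‖ξ-η‖⁻²‖η‖⁻² dη ≤ 320 v ‖ξ‖⁻¹. -/
private lemma LJS_conv_bound {ξ : E3} (hξ : ξ ≠ 0) :
    ∫⁻ η, (ENNReal.ofReal (‖ξ - η‖^2))⁻¹ * (ENNReal.ofReal (‖η‖^2))⁻¹ ∂volume
      ≤ 320 * volume (ball (0:E3) 1) * (ENNReal.ofReal ‖ξ‖)⁻¹ := by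
  set v := volume (ball (0:E3) 1) with hv
  set r := ‖ξ‖ with hrdef
  have hr : 0 < r := norm_pos_iff.2 hξ
  set f : E3 → ℝ≥0∞ := fun η => (ENNReal.ofReal (‖ξ - η‖^2))⁻¹ * (ENNReal.ofReal (‖η‖^2))⁻¹
    with hf
  set S1 := ball (0:E3) (r/2) with hS1
  set S2 := ball ξ (r/2) with hS2
  have hofr : ENNReal.ofReal r⁻¹ = (ENNReal.ofReal r)⁻¹ := ENNReal.ofReal_inv_of_pos hr
  -- bound on S1
  have hI1 : ∫⁻ η in S1, f η ∂volume ≤ 16 * v * (ENNReal.ofReal r)⁻¹ := by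
    have hb : ∀ η ∈ S1, f η ≤ (ENNReal.ofReal ((r/2)^2))⁻¹ * (ENNReal.ofReal (‖η‖^2))⁻¹ := by
      intro η hη
      rw [mem_ball, dist_zero_right] at hη
      have h1 : r/2 ≤ ‖ξ - η‖ := by
        have := norm_sub_norm_le ξ η
        linarith [norm_sub_norm_le ξ η]
      show (ENNReal.ofReal (‖ξ - η‖^2))⁻¹ * (ENNReal.ofReal (‖η‖^2))⁻¹ ≤ _
      refine mul_le_mul' (ENNReal.inv_le_inv.2 (ENNReal.ofReal_le_ofReal ?_)) le_rfl
      nlinarith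
    calc ∫⁻ η in S1, f η ∂volume
        ≤ ∫⁻ η in S1, (ENNReal.ofReal ((r/2)^2))⁻¹ * (ENNReal.ofReal (‖η‖^2))⁻¹ ∂volume :=
          setLIntegral_mono (measurable_const.mul LJS_meas_inv_sq) hb
      _ = (ENNReal.ofReal ((r/2)^2))⁻¹ * ∫⁻ η in S1, (ENNReal.ofReal (‖η‖^2))⁻¹ ∂volume :=
          lintegral_const_mul _ LJS_meas_inv_sq
      _ ≤ (ENNReal.ofReal ((r/2)^2))⁻¹ * (8 * ENNReal.ofReal (r/2) * v) := by
          gcongr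
          exact LJS_inv_sq_ball (by positivity)
      _ = 16 * v * (ENNReal.ofReal r)⁻¹ := by
          rw [← ENNReal.ofReal_inv_of_pos (by positivity), mul_comm (8 : ℝ≥0∞), mul_assoc,
            ← mul_assoc (ENNReal.ofReal ((r/2)^2)⁻¹), ← ENNReal.ofReal_mul (by positivity)]
          have : ((r/2)^2)⁻¹ * (r/2) = 2 * r⁻¹ := by field_simp
          rw [this, ENNReal.ofReal_mul (by norm_num), hofr]
          norm_num
          ring
  -- bound on S2 via translation
  have hI2 : ∫⁻ η in S2, f η ∂volume ≤ 16 * v * (ENNReal.ofReal r)⁻¹ := by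
    have hb : ∀ η ∈ S2, f η ≤ (ENNReal.ofReal ((r/2)^2))⁻¹ * (ENNReal.ofReal (‖ξ - η‖^2))⁻¹ := by
      intro η hη
      rw [mem_ball, dist_eq_norm] at hη
      have hξη : ‖ξ - η‖ < r/2 := by rwa [norm_sub_rev]
      have h1 : r/2 ≤ ‖η‖ := by
        have := norm_sub_norm_le ξ η
        have h2 : ‖ξ‖ - ‖η‖ ≤ ‖ξ - η‖ := by
          simpa using norm_sub_norm_le ξ η
        linarith
      show (ENNReal.ofReal (‖ξ - η‖^2))⁻¹ * (ENNReal.ofReal (‖η‖^2))⁻¹ ≤ _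
      rw [mul_comm]
      exact mul_le_mul' (ENNReal.inv_le_inv.2 (ENNReal.ofReal_le_ofReal (by nlinarith))) le_rfl
    have hmeas2 : Measurable fun η : E3 => (ENNReal.ofReal (‖ξ - η‖^2))⁻¹ :=
      ((((measurable_const.sub measurable_id).norm).pow_const 2).ennreal_ofReal).inv
    have htrans : ∫⁻ η in S2, (ENNReal.ofReal (‖ξ - η‖^2))⁻¹ ∂volume
        = ∫⁻ η in ball (0:E3) (r/2), (ENNReal.ofReal (‖η‖^2))⁻¹ ∂volume := by
      have hind : ∀ η : E3, S2.indicator (fun η => (ENNReal.ofReal (‖ξ - η‖^2))⁻¹) η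
          = (ball (0:E3) (r/2)).indicator (fun x => (ENNReal.ofReal (‖x‖^2))⁻¹) (ξ - η) := by
        intro η
        by_cases h : η ∈ S2
        · have h' : ξ - η ∈ ball (0:E3) (r/2) := by
            rw [mem_ball, dist_zero_right]
            rw [hS2, mem_ball, dist_eq_norm, norm_sub_rev] at h
            exact h
          rw [Set.indicator_of_mem h, Set.indicator_of_mem h']
        · have h' : ξ - η ∉ ball (0:E3) (r/2) := by
            rw [mem_ball, dist_zero_right]
            rw [hS2, mem_ball, dist_eq_norm, norm_sub_rev] at h
            exact h
          rw [Set.indicator_of_notMem h, Set.indicator_of_notMem h']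
      have hmp := Measure.measurePreserving_sub_left (volume : Measure E3) ξ
      calc ∫⁻ η in S2, (ENNReal.ofReal (‖ξ - η‖^2))⁻¹ ∂volume
          = ∫⁻ η, (ball (0:E3) (r/2)).indicator
              (fun x => (ENNReal.ofReal (‖x‖^2))⁻¹) (ξ - η) ∂volume := by
            rw [← lintegral_indicator measurableSet_ball]
            exact lintegral_congr hind
        _ = ∫⁻ x, (ball (0:E3) (r/2)).indicator
              (fun x => (ENNReal.ofReal (‖x‖^2))⁻¹) x ∂volume := by
            conv_rhs => rw [← hmp.map_eq]
            exact (lintegral_map (LJS_meas_inv_sq.indicator measurableSet_ball)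
              hmp.measurable).symm
        _ = ∫⁻ η in ball (0:E3) (r/2), (ENNReal.ofReal (‖η‖^2))⁻¹ ∂volume :=
            lintegral_indicator measurableSet_ball _
    calc ∫⁻ η in S2, f η ∂volume
        ≤ ∫⁻ η in S2, (ENNReal.ofReal ((r/2)^2))⁻¹ * (ENNReal.ofReal (‖ξ - η‖^2))⁻¹ ∂volume :=
          setLIntegral_mono (measurable_const.mul hmeas2) hb
      _ = (ENNReal.ofReal ((r/2)^2))⁻¹ * ∫⁻ η in S2, (ENNReal.ofReal (‖ξ - η‖^2))⁻¹ ∂volume :=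
          lintegral_const_mul _ hmeas2
      _ = (ENNReal.ofReal ((r/2)^2))⁻¹
            * ∫⁻ η in ball (0:E3) (r/2), (ENNReal.ofReal (‖η‖^2))⁻¹ ∂volume := by rw [htrans]
      _ ≤ (ENNReal.ofReal ((r/2)^2))⁻¹ * (8 * ENNReal.ofReal (r/2) * v) := by
          gcongr
          exact LJS_inv_sq_ball (by positivity)
      _ = 16 * v * (ENNReal.ofReal r)⁻¹ := by
          rw [← ENNReal.ofReal_inv_of_pos (by positivity), mul_comm (8 : ℝ≥0∞), mul_assoc,
            ← mul_assoc (ENNReal.ofReal ((r/2)^2)⁻¹), ← ENNReal.ofReal_mul (by positivity)]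
          have : ((r/2)^2)⁻¹ * (r/2) = 2 * r⁻¹ := by field_simp
          rw [this, ENNReal.ofReal_mul (by norm_num), hofr]
          norm_num
          ring
  -- bound on S3
  have hI3 : ∫⁻ η in (S1 ∪ S2)ᶜ, f η ∂volume ≤ 288 * v * (ENNReal.ofReal r)⁻¹ := by
    have hb : ∀ η ∈ (S1 ∪ S2)ᶜ, f η ≤ 9 * (ENNReal.ofReal (‖η‖^4))⁻¹ := by
      intro η hη
      rw [mem_compl_iff, mem_union, not_or] at hη
      obtain ⟨h1, h2⟩ := hη
      rw [hS1, mem_ball, dist_zero_right, not_lt] at h1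
      rw [hS2, mem_ball, dist_eq_norm, not_lt] at h2
      have h2' : r/2 ≤ ‖ξ - η‖ := by rwa [norm_sub_rev] at h2
      have hη3 : ‖η‖/3 ≤ ‖ξ - η‖ := by
        rcases le_or_gt ‖η‖ (3/2 * r) with hc | hc
        · linarith
        · have := norm_sub_norm_le η ξ
          rw [← norm_sub_rev ξ η] at this
          linarith
      have hηpos : 0 < ‖η‖ := lt_of_lt_of_le (by positivity) h1
      have hsq : (0:ℝ) < ‖η‖^2 := pow_pos hηpos 2
      have key : f η ≤ (ENNReal.ofReal (‖η‖^2/9))⁻¹ * (ENNReal.ofReal (‖η‖^2))⁻¹ := by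
        show (ENNReal.ofReal (‖ξ - η‖^2))⁻¹ * (ENNReal.ofReal (‖η‖^2))⁻¹ ≤ _
        refine mul_le_mul' (ENNReal.inv_le_inv.2 (ENNReal.ofReal_le_ofReal (by nlinarith))) le_rfl
      refine key.trans ?_
      rw [← ENNReal.ofReal_inv_of_pos (by positivity),
        ← ENNReal.ofReal_inv_of_pos hsq,
        ← ENNReal.ofReal_mul (by positivity)]
      have heq : (‖η‖^2/9)⁻¹ * (‖η‖^2)⁻¹ = 9 * (‖η‖^4)⁻¹ := by
        field_simp
      rw [heq, ENNReal.ofReal_mul (by norm_num), ENNReal.ofReal_inv_of_pos (by positivity)]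
      norm_num
    have hmeas4 : Measurable fun η : E3 => (9:ℝ≥0∞) * (ENNReal.ofReal (‖η‖^4))⁻¹ :=
      measurable_const.mul (((measurable_norm.pow_const 4).ennreal_ofReal).inv)
    calc ∫⁻ η in (S1 ∪ S2)ᶜ, f η ∂volume
        ≤ ∫⁻ η in (S1 ∪ S2)ᶜ, 9 * (ENNReal.ofReal (‖η‖^4))⁻¹ ∂volume :=
          setLIntegral_mono hmeas4 hb
      _ ≤ ∫⁻ η in S1ᶜ, 9 * (ENNReal.ofReal (‖η‖^4))⁻¹ ∂volume :=
          lintegral_mono_set (compl_subset_compl.2 subset_union_left)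
      _ = 9 * ∫⁻ η in S1ᶜ, (ENNReal.ofReal (‖η‖^4))⁻¹ ∂volume :=
          lintegral_const_mul _ (((measurable_norm.pow_const 4).ennreal_ofReal).inv)
      _ ≤ 9 * (16 * ENNReal.ofReal (r/2)⁻¹ * v) := by
          gcongr
          exact LJS_inv_p4_compl (by positivity)
      _ = 288 * v * (ENNReal.ofReal r)⁻¹ := by
          have : (r/2)⁻¹ = 2 * r⁻¹ := by field_simp
          rw [this, ENNReal.ofReal_mul (by norm_num), hofr]
          norm_num
          ring
  calc ∫⁻ η, f η ∂volume = ∫⁻ η in (S1 ∪ S2) ∪ (S1 ∪ S2)ᶜ, f η ∂volume := by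
        rw [Set.union_compl_self, Measure.restrict_univ]
    _ ≤ (∫⁻ η in S1 ∪ S2, f η ∂volume) + ∫⁻ η in (S1 ∪ S2)ᶜ, f η ∂volume :=
        lintegral_union_le _ _ _
    _ ≤ ((∫⁻ η in S1, f η ∂volume) + ∫⁻ η in S2, f η ∂volume)
          + ∫⁻ η in (S1 ∪ S2)ᶜ, f η ∂volume := by
        gcongr
        exact lintegral_union_le _ _ _
    _ ≤ (16 * v * (ENNReal.ofReal r)⁻¹ + 16 * v * (ENNReal.ofReal r)⁻¹)
          + 288 * v * (ENNReal.ofReal r)⁻¹ := by gcongr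
    _ = 320 * v * (ENNReal.ofReal r)⁻¹ := by ring

end LJSaux

theorem leJan_Sznitman_bilinear_estimate :
    ∃ C : ℝ≥0, 0 < C ∧
      ∀ Z V : EuclideanSpace ℝ (Fin 3) → ℝ≥0∞, Measurable Z → Measurable V →
        essSup (fun ξ : EuclideanSpace ℝ (Fin 3) =>
            ENNReal.ofReal (‖ξ‖ ^ 2) *
              ((ENNReal.ofReal ‖ξ‖)⁻¹ * ∫⁻ η, Z (ξ - η) * V η)) volume
          ≤ C * essSup (fun ξ : EuclideanSpace ℝ (Fin 3) =>
                ENNReal.ofReal (‖ξ‖ ^ 2) * Z ξ) volume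
              * essSup (fun ξ : EuclideanSpace ℝ (Fin 3) =>
                ENNReal.ofReal (‖ξ‖ ^ 2) * V ξ) volume := by
  classical
  set v := volume (Metric.ball (0 : EuclideanSpace ℝ (Fin 3)) 1) with hv
  have hvfin : v ≠ ∞ := measure_ball_lt_top.ne
  refine ⟨320 * v.toNNReal + 1, by positivity, ?_⟩
  intro Z V hZm hVm
  set MZ := essSup (fun ξ : EuclideanSpace ℝ (Fin 3) => ENNReal.ofReal (‖ξ‖ ^ 2) * Z ξ) volume
  set MV := essSup (fun ξ : EuclideanSpace ℝ (Fin 3) => ENNReal.ofReal (‖ξ‖ ^ 2) * V ξ) volume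
  have hC : (320 : ℝ≥0∞) * v ≤ ((320 * v.toNNReal + 1 : ℝ≥0) : ℝ≥0∞) := by
    push_cast
    rw [ENNReal.coe_toNNReal hvfin]
    exact le_add_of_nonneg_right zero_le
  -- pointwise a.e. bounds
  have h0 : ∀ᵐ x : EuclideanSpace ℝ (Fin 3) ∂volume, x ≠ 0 := by
    rw [ae_iff]
    simpa using measure_singleton (0 : EuclideanSpace ℝ (Fin 3))
  have haeBound : ∀ (W : EuclideanSpace ℝ (Fin 3) → ℝ≥0∞),
      ∀ᵐ x : EuclideanSpace ℝ (Fin 3) ∂volume,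
        W x ≤ (ENNReal.ofReal (‖x‖^2))⁻¹ *
          essSup (fun ξ : EuclideanSpace ℝ (Fin 3) => ENNReal.ofReal (‖ξ‖ ^ 2) * W ξ) volume := by
    intro W
    filter_upwards [ENNReal.ae_le_essSup
      (fun ξ : EuclideanSpace ℝ (Fin 3) => ENNReal.ofReal (‖ξ‖ ^ 2) * W ξ), h0] with x hx hx0
    have hpos : (0:ℝ) < ‖x‖^2 := pow_pos (norm_pos_iff.2 hx0) 2
    have ha0 : ENNReal.ofReal (‖x‖^2) ≠ 0 := by
      simpa [ENNReal.ofReal_eq_zero, not_le] using hx0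
    have hatop : ENNReal.ofReal (‖x‖^2) ≠ ∞ := ENNReal.ofReal_ne_top
    calc W x = (ENNReal.ofReal (‖x‖^2))⁻¹ * (ENNReal.ofReal (‖x‖^2) * W x) := by
          rw [← mul_assoc, ENNReal.inv_mul_cancel ha0 hatop, one_mul]
      _ ≤ _ := mul_le_mul' le_rfl hx
  -- the main a.e. estimate
  refine essSup_le_of_ae_le _ ?_
  filter_upwards [h0] with ξ hξ0
  have hr : (0:ℝ) < ‖ξ‖ := norm_pos_iff.2 hξ0
  -- bound on the convolution integral
  have hZae : ∀ᵐ η : EuclideanSpace ℝ (Fin 3) ∂volume,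
      Z (ξ - η) ≤ (ENNReal.ofReal (‖ξ - η‖^2))⁻¹ * MZ :=
    (Measure.measurePreserving_sub_left (volume : Measure (EuclideanSpace ℝ (Fin 3)))
      ξ).quasiMeasurePreserving.ae (haeBound Z)
  have hVae := haeBound V
  have hmeasg : Measurable fun η : EuclideanSpace ℝ (Fin 3) =>
      (ENNReal.ofReal (‖ξ - η‖^2))⁻¹ * (ENNReal.ofReal (‖η‖^2))⁻¹ :=
    ((((measurable_const.sub measurable_id).norm).pow_const 2).ennreal_ofReal).inv.mul
      (((measurable_norm.pow_const 2).ennreal_ofReal).inv)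
  have hconv : (∫⁻ η, Z (ξ - η) * V η)
      ≤ MZ * MV * (((320 * v.toNNReal + 1 : ℝ≥0) : ℝ≥0∞) * (ENNReal.ofReal ‖ξ‖)⁻¹) := by
    calc (∫⁻ η, Z (ξ - η) * V η)
        ≤ ∫⁻ η, MZ * MV * ((ENNReal.ofReal (‖ξ - η‖^2))⁻¹ * (ENNReal.ofReal (‖η‖^2))⁻¹) := by
          refine lintegral_mono_ae ?_
          filter_upwards [hZae, hVae] with η h1 h2
          calc Z (ξ - η) * V η
              ≤ ((ENNReal.ofReal (‖ξ - η‖^2))⁻¹ * MZ) * ((ENNReal.ofReal (‖η‖^2))⁻¹ * MV) :=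
                mul_le_mul' h1 h2
            _ = MZ * MV * ((ENNReal.ofReal (‖ξ - η‖^2))⁻¹ * (ENNReal.ofReal (‖η‖^2))⁻¹) := by
                ring
      _ = MZ * MV * ∫⁻ η, (ENNReal.ofReal (‖ξ - η‖^2))⁻¹ * (ENNReal.ofReal (‖η‖^2))⁻¹ :=
          lintegral_const_mul _ hmeasg
      _ ≤ MZ * MV * (320 * v * (ENNReal.ofReal ‖ξ‖)⁻¹) := by
          gcongr
          exact LJS_conv_bound hξ0
      _ ≤ MZ * MV * (((320 * v.toNNReal + 1 : ℝ≥0) : ℝ≥0∞) * (ENNReal.ofReal ‖ξ‖)⁻¹) := by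
          gcongr
  -- assemble
  calc ENNReal.ofReal (‖ξ‖ ^ 2) * ((ENNReal.ofReal ‖ξ‖)⁻¹ * ∫⁻ η, Z (ξ - η) * V η)
      ≤ ENNReal.ofReal (‖ξ‖ ^ 2) * ((ENNReal.ofReal ‖ξ‖)⁻¹ *
          (MZ * MV * (((320 * v.toNNReal + 1 : ℝ≥0) : ℝ≥0∞) * (ENNReal.ofReal ‖ξ‖)⁻¹))) := by
        gcongr
    _ = ((320 * v.toNNReal + 1 : ℝ≥0) : ℝ≥0∞) * MZ * MV *
          ((ENNReal.ofReal ‖ξ‖ * (ENNReal.ofReal ‖ξ‖)⁻¹)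
            * (ENNReal.ofReal ‖ξ‖ * (ENNReal.ofReal ‖ξ‖)⁻¹)) := by
        rw [sq, ENNReal.ofReal_mul (norm_nonneg ξ)]
        ring
    _ ≤ ((320 * v.toNNReal + 1 : ℝ≥0) : ℝ≥0∞) * MZ * MV * (1 * 1) := by
        gcongr <;> exact ENNReal.mul_inv_le_one _
    _ = ((320 * v.toNNReal + 1 : ℝ≥0) : ℝ≥0∞) * MZ * MV := by rw [mul_one, mul_one]
end

section
/- Let F = {Z measurable on ℝ³ : ‖Z‖_F := ess sup_ξ |ξ|^(5/2) |Z(ξ)| < ∞}. There exists C such that for all Z, V ∈ F, ‖ |ξ|^(−1/2) (|Z|∗|V|) ‖_F ≤ C ‖Z‖_F ‖V‖_F. -/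
open MeasureTheory
open scoped ENNReal NNReal

open Set Metric

noncomputable section
namespace LJSAux

lemma rpow_two' (x : ℝ) : x ^ (2:ℝ) = x ^ 2 := by
  rw [show (2:ℝ) = ((2:ℕ):ℝ) by norm_num, Real.rpow_natCast]

lemma rmul1 {r : ℝ} (h0 : 0 < r) : ENNReal.ofReal (r ^ 2) * (ENNReal.ofReal r) ^ (-(5:ℝ)/2)
    = ENNReal.ofReal (r ^ (-(1:ℝ)/2)) := by
  rw [ENNReal.ofReal_rpow_of_pos h0, ← ENNReal.ofReal_mul (by positivity)]
  congr 1
  rw [← Real.rpow_natCast r 2, ← Real.rpow_add h0]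
  norm_num

lemma rmul2 {r : ℝ} (h0 : 0 < r) : ENNReal.ofReal (r ^ 2) * (ENNReal.ofReal r) ^ (-(3:ℝ))
    = ENNReal.ofReal (r ^ (-(1:ℝ))) := by
  rw [ENNReal.ofReal_rpow_of_pos h0, ← ENNReal.ofReal_mul (by positivity)]
  congr 1
  rw [← Real.rpow_natCast r 2, ← Real.rpow_add h0]
  norm_num

lemma rpow_anti {a b : ℝ≥0∞} {c : ℝ} (hc : c ≤ 0) (h : a ≤ b) : b ^ c ≤ a ^ c := by
  rw [← neg_neg c, ENNReal.rpow_neg a, ENNReal.rpow_neg b]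
  exact ENNReal.inv_le_inv.2 (ENNReal.rpow_le_rpow h (by linarith))

lemma le_inv_mul_of_mul_le {a z A : ℝ≥0∞} (ha0 : a ≠ 0) (hat : a ≠ ∞) (h : a * z ≤ A) :
    z ≤ a⁻¹ * A := by
  calc z = a⁻¹ * a * z := by rw [ENNReal.inv_mul_cancel ha0 hat, one_mul]
  _ = a⁻¹ * (a * z) := mul_assoc _ _ _
  _ ≤ a⁻¹ * A := mul_le_mul_right h _

lemma rcalc1 {t : ℝ} (ht : 0 < t) :
    (t/2) ^ (-(5:ℝ)/2) * (2 * (t/2) ^ ((1:ℝ)/2)) = 8 * t ^ (-(2:ℝ)) := by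
  have h2 : (0:ℝ) < t/2 := by positivity
  rw [mul_comm (2:ℝ), ← mul_assoc, ← Real.rpow_add h2, show (-(5:ℝ)/2 + (1:ℝ)/2) = -(2:ℝ) by norm_num,
    Real.rpow_neg h2.le, Real.rpow_neg ht.le, rpow_two', rpow_two']
  field_simp
  ring

lemma rcalc3 {s : ℝ} (hs : 0 < s) :
    (s/4) ^ (-(5:ℝ)/2) * s ^ (-(5:ℝ)/2) = 32 * s ^ (-(5:ℝ)) := by
  have h4 : (0:ℝ) < s/4 := by positivity
  have key : (4:ℝ) ^ (-(5:ℝ)/2) = 1/32 := by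
    rw [show (4:ℝ) = 2 ^ (2:ℝ) by rw [rpow_two']; norm_num, ← Real.rpow_mul (by norm_num),
      show ((2:ℝ) * (-(5:ℝ)/2)) = -(5:ℝ) by norm_num, Real.rpow_neg (by norm_num),
      show (5:ℝ) = ((5:ℕ):ℝ) by norm_num, Real.rpow_natCast]
    norm_num
  rw [Real.div_rpow hs.le (by norm_num), key]
  rw [show s ^ (-(5:ℝ)/2) / (1/32) * s ^ (-(5:ℝ)/2) = 32 * (s ^ (-(5:ℝ)/2) * s ^ (-(5:ℝ)/2)) by ring,
    ← Real.rpow_add hs, show (-(5:ℝ)/2 + -(5:ℝ)/2) = -(5:ℝ) by norm_num]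

lemma rcalc4 {t : ℝ} (ht : 0 < t) : (32:ℝ) * ((t/2) ^ (-(2:ℝ)) / 2) = 64 * t ^ (-(2:ℝ)) := by
  rw [Real.rpow_neg (by positivity), Real.rpow_neg ht.le, rpow_two', rpow_two']
  field_simp
  ring

local notation "E3" => EuclideanSpace ℝ (Fin 3)

abbrev κ : ℝ≥0∞ := Measure.toSphere (volume : Measure E3) Set.univ

lemma kappa_ne_top : κ ≠ ∞ := measure_ne_top _ _

lemma polar (g : ℝ → ℝ≥0∞) (hg : Measurable g) :
    ∫⁻ x : E3, g ‖x‖ = κ * ∫⁻ r in Ioi (0:ℝ), ENNReal.ofReal (r ^ 2) * g r := by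
  have hgm : Measurable fun p : (sphere (0:E3) 1) × (Ioi (0:ℝ)) => g p.2.1 :=
    hg.comp (measurable_subtype_coe.comp measurable_snd)
  have hd : Module.finrank ℝ E3 - 1 = 2 := by rw [finrank_euclideanSpace_fin]
  calc ∫⁻ x : E3, g ‖x‖
      = ∫⁻ x : ({(0:E3)}ᶜ : Set E3), g ‖x.1‖ ∂((volume : Measure E3).comap Subtype.val) := by
        rw [lintegral_subtype_comap (measurableSet_singleton _).compl fun x => g ‖x‖,
          restrict_compl_singleton]
    _ = ∫⁻ p : (sphere (0:E3) 1) × (Ioi (0:ℝ)), g p.2.1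
          ∂(Measure.toSphere (volume : Measure E3)).prod
            (Measure.volumeIoiPow (Module.finrank ℝ E3 - 1)) := by
        rw [← (volume : Measure E3).measurePreserving_homeomorphUnitSphereProd.lintegral_comp hgm]
        simp [homeomorphUnitSphereProd_apply_snd_coe]
    _ = κ * ∫⁻ r : (Ioi (0:ℝ)), g r.1 ∂(Measure.volumeIoiPow (Module.finrank ℝ E3 - 1)) := by
        rw [lintegral_prod _ hgm.aemeasurable]
        rw [show (∫⁻ (x : ↑(sphere (0:E3) 1)), ∫⁻ (y : ↑(Ioi (0:ℝ))), g ↑(x, y).2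
              ∂(Measure.volumeIoiPow (Module.finrank ℝ E3 - 1)) ∂(volume : Measure E3).toSphere)
            = ∫⁻ (_x : ↑(sphere (0:E3) 1)), (∫⁻ (r : ↑(Ioi (0:ℝ))), g ↑r
              ∂(Measure.volumeIoiPow (Module.finrank ℝ E3 - 1))) ∂(volume : Measure E3).toSphere
          from rfl, lintegral_const]
        ring
    _ = κ * ∫⁻ r in Ioi (0:ℝ), ENNReal.ofReal (r ^ 2) * g r := by
        congr 1
        rw [hd, Measure.volumeIoiPow,
          lintegral_withDensity_eq_lintegral_mul _
            ((measurable_subtype_coe.pow_const 2).ennreal_ofReal)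
            (show Measurable fun r : ↑(Ioi (0:ℝ)) => g ↑r from hg.comp measurable_subtype_coe)]
        simp only [Pi.mul_apply]
        exact lintegral_subtype_comap measurableSet_Ioi fun r => ENNReal.ofReal (r ^ 2) * g r

lemma meas_radial (c : ℝ) : Measurable fun x : E3 => (ENNReal.ofReal ‖x‖) ^ c :=
  ENNReal.continuous_rpow_const.measurable.comp (ENNReal.measurable_ofReal.comp measurable_norm)

lemma ball_int {R : ℝ} (hR : 0 < R) :
    ∫⁻ x : E3 in ball (0:E3) R, (ENNReal.ofReal ‖x‖) ^ (-(5:ℝ)/2)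
      ≤ κ * ENNReal.ofReal (2 * R ^ ((1:ℝ)/2)) := by
  set g : ℝ → ℝ≥0∞ := (Iio R).indicator (fun r => (ENNReal.ofReal r) ^ (-(5:ℝ)/2)) with hgdef
  have hgm : Measurable g :=
    (ENNReal.continuous_rpow_const.measurable.comp ENNReal.measurable_ofReal).indicator
      measurableSet_Iio
  have h1 : ∫⁻ x : E3 in ball (0:E3) R, (ENNReal.ofReal ‖x‖) ^ (-(5:ℝ)/2)
      = ∫⁻ x : E3, g ‖x‖ := by
    rw [← lintegral_indicator measurableSet_ball]
    refine lintegral_congr fun x => ?_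
    by_cases hx : ‖x‖ < R
    · rw [indicator_of_mem (mem_ball_zero_iff.2 hx), hgdef, indicator_of_mem (mem_Iio.2 hx)]
    · rw [indicator_of_notMem (fun h => hx (mem_ball_zero_iff.1 h)), hgdef,
        indicator_of_notMem (fun h => hx (mem_Iio.1 h))]
  have h2 : ∫⁻ r in Ioi (0:ℝ), ENNReal.ofReal (r ^ 2) * g r
      = ∫⁻ r in Ioo (0:ℝ) R, ENNReal.ofReal (r ^ (-(1:ℝ)/2)) := by
    rw [← lintegral_indicator measurableSet_Ioi, ← lintegral_indicator measurableSet_Ioo]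
    refine lintegral_congr fun r => ?_
    by_cases h0 : 0 < r
    · by_cases hr : r < R
      · rw [indicator_of_mem (mem_Ioi.2 h0), hgdef, indicator_of_mem (mem_Iio.2 hr),
          indicator_of_mem (mem_Ioo.2 ⟨h0, hr⟩), rmul1 h0]
      · rw [indicator_of_mem (mem_Ioi.2 h0), hgdef, indicator_of_notMem (fun h => hr (mem_Iio.1 h)),
          indicator_of_notMem (fun h => hr (mem_Ioo.1 h).2), mul_zero]
    · rw [indicator_of_notMem (fun h => h0 (mem_Ioi.1 h)),
        indicator_of_notMem (fun h => h0 (mem_Ioo.1 h).1)]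
  have hInt : IntegrableOn (fun r : ℝ => r ^ (-(1:ℝ)/2)) (Ioo (0:ℝ) R) volume := by
    have := (intervalIntegral.intervalIntegrable_rpow' (a := 0) (b := R)
      (by norm_num : (-1:ℝ) < -(1:ℝ)/2))
    rwa [intervalIntegrable_iff_integrableOn_Ioo_of_le hR.le] at this
  have h3 : ∫⁻ r in Ioo (0:ℝ) R, ENNReal.ofReal (r ^ (-(1:ℝ)/2))
      = ENNReal.ofReal (∫ r in Ioo (0:ℝ) R, r ^ (-(1:ℝ)/2)) := by
    rw [ofReal_integral_eq_lintegral_ofReal hInt]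
    filter_upwards [ae_restrict_mem measurableSet_Ioo] with r hr
    exact Real.rpow_nonneg hr.1.le _
  have h4 : (∫ r in Ioo (0:ℝ) R, r ^ (-(1:ℝ)/2)) = 2 * R ^ ((1:ℝ)/2) := by
    rw [setIntegral_congr_set Ioo_ae_eq_Ioc, ← intervalIntegral.integral_of_le hR.le,
      integral_rpow (Or.inl (by norm_num : (-1:ℝ) < -(1:ℝ)/2))]
    rw [Real.zero_rpow (by norm_num : (-(1:ℝ)/2 + 1) ≠ 0)]
    norm_num
    ring
  rw [h1, polar g hgm, h2, h3, h4]
lemma compl_int {R : ℝ} (hR : 0 < R) :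
    ∫⁻ x : E3 in (ball (0:E3) R)ᶜ, (ENNReal.ofReal ‖x‖) ^ (-(5:ℝ))
      ≤ κ * ENNReal.ofReal (R ^ (-(2:ℝ)) / 2) := by
  set g : ℝ → ℝ≥0∞ := (Ici R).indicator (fun r => (ENNReal.ofReal r) ^ (-(5:ℝ))) with hgdef
  have hgm : Measurable g :=
    (ENNReal.continuous_rpow_const.measurable.comp ENNReal.measurable_ofReal).indicator
      measurableSet_Ici
  have h1 : ∫⁻ x : E3 in (ball (0:E3) R)ᶜ, (ENNReal.ofReal ‖x‖) ^ (-(5:ℝ))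
      = ∫⁻ x : E3, g ‖x‖ := by
    rw [← lintegral_indicator measurableSet_ball.compl]
    refine lintegral_congr fun x => ?_
    by_cases hx : R ≤ ‖x‖
    · rw [indicator_of_mem (by simp [mem_ball_zero_iff, not_lt.2 hx] : x ∈ (ball (0:E3) R)ᶜ),
        hgdef, indicator_of_mem (mem_Ici.2 hx)]
    · rw [indicator_of_notMem
        (by simp [mem_ball_zero_iff, lt_of_not_ge hx] : x ∉ (ball (0:E3) R)ᶜ), hgdef,
        indicator_of_notMem (fun h => hx (mem_Ici.1 h))]
  have hrmul : ∀ r : ℝ, R ≤ r → ENNReal.ofReal (r ^ 2) * (ENNReal.ofReal r) ^ (-(5:ℝ))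
      = ENNReal.ofReal (r ^ (-(3:ℝ))) := by
    intro r hr
    have h0 : 0 < r := lt_of_lt_of_le hR hr
    rw [ENNReal.ofReal_rpow_of_pos h0, ← ENNReal.ofReal_mul (by positivity)]
    congr 1
    rw [← Real.rpow_natCast r 2, ← Real.rpow_add h0]
    norm_num
  have h2 : ∫⁻ r in Ioi (0:ℝ), ENNReal.ofReal (r ^ 2) * g r
      = ∫⁻ r in Ioi R, ENNReal.ofReal (r ^ (-(3:ℝ))) := by
    rw [show (volume : Measure ℝ).restrict (Ioi R) = (volume : Measure ℝ).restrict (Ici R) from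
      Measure.restrict_congr_set (Ioi_ae_eq_Ici (a := R))]
    rw [← lintegral_indicator measurableSet_Ioi, ← lintegral_indicator measurableSet_Ici]
    refine lintegral_congr fun r => ?_
    by_cases hr : R ≤ r
    · rw [indicator_of_mem (mem_Ioi.2 (lt_of_lt_of_le hR hr)), hgdef,
        indicator_of_mem (mem_Ici.2 hr), indicator_of_mem (mem_Ici.2 hr), hrmul r hr]
    · by_cases h0 : 0 < r
      · rw [indicator_of_mem (mem_Ioi.2 h0), hgdef,
          indicator_of_notMem (fun h => hr (mem_Ici.1 h)),
          indicator_of_notMem (fun h => hr (mem_Ici.1 h)), mul_zero]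
      · rw [indicator_of_notMem (fun h => h0 (mem_Ioi.1 h)),
          indicator_of_notMem (fun h => hr (mem_Ici.1 h))]
  have hInt : IntegrableOn (fun r : ℝ => r ^ (-(3:ℝ))) (Ioi R) volume :=
    integrableOn_Ioi_rpow_of_lt (by norm_num) hR
  have h3 : ∫⁻ r in Ioi R, ENNReal.ofReal (r ^ (-(3:ℝ)))
      = ENNReal.ofReal (∫ r in Ioi R, r ^ (-(3:ℝ))) := by
    rw [ofReal_integral_eq_lintegral_ofReal hInt]
    filter_upwards [ae_restrict_mem measurableSet_Ioi] with r hr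
    exact Real.rpow_nonneg (le_trans hR.le (mem_Ioi.1 hr).le) _
  have h4 : (∫ r in Ioi R, r ^ (-(3:ℝ))) = R ^ (-(2:ℝ)) / 2 := by
    rw [integral_Ioi_rpow_of_lt (by norm_num) hR]
    norm_num
  rw [h1, polar g hgm, h2, h3, h4]
lemma kernel {ξ : E3} (hξ : ξ ≠ 0) :
    ∫⁻ η : E3, (ENNReal.ofReal ‖ξ - η‖) ^ (-(5:ℝ)/2) * (ENNReal.ofReal ‖η‖) ^ (-(5:ℝ)/2)
      ≤ ENNReal.ofReal 80 * κ * (ENNReal.ofReal ‖ξ‖) ^ (-(2:ℝ)) := by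
  have ht : 0 < ‖ξ‖ := norm_pos_iff.2 hξ
  set t : ℝ := ‖ξ‖ with htdef
  have ht2 : 0 < t/2 := by positivity
  set f : E3 → ℝ≥0∞ := fun η =>
    (ENNReal.ofReal ‖ξ - η‖) ^ (-(5:ℝ)/2) * (ENNReal.ofReal ‖η‖) ^ (-(5:ℝ)/2) with hfdef
  set S1 : Set E3 := ball (0:E3) (t/2) with hS1def
  set S2 : Set E3 := ball ξ (t/2) with hS2def
  have hc_ne : (ENNReal.ofReal (t/2)) ^ (-(5:ℝ)/2) ≠ ∞ := by
    rw [ENNReal.ofReal_rpow_of_pos ht2]; exact ENNReal.ofReal_ne_top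
  have hcombine : (ENNReal.ofReal (t/2)) ^ (-(5:ℝ)/2) * (κ * ENNReal.ofReal (2 * (t/2) ^ ((1:ℝ)/2)))
      = κ * ENNReal.ofReal (8 * t ^ (-(2:ℝ))) := by
    rw [ENNReal.ofReal_rpow_of_pos ht2, ← mul_assoc,
      mul_comm (ENNReal.ofReal ((t/2) ^ (-(5:ℝ)/2))) κ, mul_assoc,
      ← ENNReal.ofReal_mul (by positivity), rcalc1 ht]
  -- Term 1
  have hb1 : ∫⁻ η in S1, f η ≤ κ * ENNReal.ofReal (8 * t ^ (-(2:ℝ))) := by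
    have step1 : ∫⁻ η in S1, f η
        ≤ ∫⁻ η in S1, (ENNReal.ofReal (t/2)) ^ (-(5:ℝ)/2) * (ENNReal.ofReal ‖η‖) ^ (-(5:ℝ)/2) := by
      refine lintegral_mono_ae ?_
      filter_upwards [ae_restrict_mem measurableSet_ball] with η hη
      have h2 : ‖η‖ < t/2 := mem_ball_zero_iff.1 hη
      have hle : t/2 ≤ ‖ξ - η‖ := by
        have h1 := norm_sub_norm_le ξ η
        linarith
      exact mul_le_mul_left (rpow_anti (by norm_num) (ENNReal.ofReal_le_ofReal hle)) _
    calc ∫⁻ η in S1, f η ≤ _ := step1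
      _ = (ENNReal.ofReal (t/2)) ^ (-(5:ℝ)/2) * ∫⁻ η in S1, (ENNReal.ofReal ‖η‖) ^ (-(5:ℝ)/2) :=
        lintegral_const_mul' _ _ hc_ne
      _ ≤ (ENNReal.ofReal (t/2)) ^ (-(5:ℝ)/2) * (κ * ENNReal.ofReal (2 * (t/2) ^ ((1:ℝ)/2))) :=
        mul_le_mul_right (ball_int ht2) _
      _ = κ * ENNReal.ofReal (8 * t ^ (-(2:ℝ))) := hcombine
  -- Term 2 via the substitution η ↦ ξ - η
  have hswap : ∫⁻ η in S2, f η = ∫⁻ η in S1,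
      (ENNReal.ofReal ‖η‖) ^ (-(5:ℝ)/2) * (ENNReal.ofReal ‖ξ - η‖) ^ (-(5:ℝ)/2) := by
    have sub_mp : MeasurePreserving (fun η : E3 => ξ - η) volume volume :=
      Measure.measurePreserving_sub_left volume ξ
    set F : E3 → ℝ≥0∞ := S1.indicator (fun x =>
      (ENNReal.ofReal ‖x‖) ^ (-(5:ℝ)/2) * (ENNReal.ofReal ‖ξ - x‖) ^ (-(5:ℝ)/2)) with hFdef
    have hFm : Measurable F := by
      exact Measurable.indicator ((meas_radial _).mul
        (ENNReal.continuous_rpow_const.measurable.comp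
          (ENNReal.measurable_ofReal.comp (measurable_const.sub measurable_id).norm)))
        measurableSet_ball
    have key : ∀ η : E3, F (ξ - η) = S2.indicator f η := by
      intro η
      by_cases h : ‖ξ - η‖ < t/2
      · have h1 : ξ - η ∈ S1 := mem_ball_zero_iff.2 h
        have h2 : η ∈ S2 := by rw [hS2def, mem_ball, dist_eq_norm, norm_sub_rev]; exact h
        rw [hFdef, indicator_of_mem h1, indicator_of_mem h2, sub_sub_cancel, hfdef]
      · have h1 : ξ - η ∉ S1 := fun hm => h (mem_ball_zero_iff.1 hm)
        have h2 : η ∉ S2 := by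
          intro hm
          exact h (by rw [norm_sub_rev, ← dist_eq_norm]; exact mem_ball.1 hm)
        rw [hFdef, indicator_of_notMem h1, indicator_of_notMem h2]
    calc ∫⁻ η in S2, f η = ∫⁻ η, S2.indicator f η := (lintegral_indicator measurableSet_ball f).symm
      _ = ∫⁻ η, F (ξ - η) := lintegral_congr fun η => (key η).symm
      _ = ∫⁻ x, F x := sub_mp.lintegral_comp hFm
      _ = _ := lintegral_indicator measurableSet_ball _
  have hb2 : ∫⁻ η in S2, f η ≤ κ * ENNReal.ofReal (8 * t ^ (-(2:ℝ))) := by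
    rw [hswap]
    have step1 : ∫⁻ η in S1, (ENNReal.ofReal ‖η‖) ^ (-(5:ℝ)/2) * (ENNReal.ofReal ‖ξ - η‖) ^ (-(5:ℝ)/2)
        ≤ ∫⁻ η in S1, (ENNReal.ofReal (t/2)) ^ (-(5:ℝ)/2) * (ENNReal.ofReal ‖η‖) ^ (-(5:ℝ)/2) := by
      refine lintegral_mono_ae ?_
      filter_upwards [ae_restrict_mem measurableSet_ball] with η hη
      have h2 : ‖η‖ < t/2 := mem_ball_zero_iff.1 hη
      have hle : t/2 ≤ ‖ξ - η‖ := by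
        have h1 := norm_sub_norm_le ξ η
        linarith
      rw [mul_comm]
      exact mul_le_mul_left (rpow_anti (by norm_num) (ENNReal.ofReal_le_ofReal hle)) _
    calc ∫⁻ η in S1, (ENNReal.ofReal ‖η‖) ^ (-(5:ℝ)/2) * (ENNReal.ofReal ‖ξ - η‖) ^ (-(5:ℝ)/2)
        ≤ _ := step1
      _ = (ENNReal.ofReal (t/2)) ^ (-(5:ℝ)/2) * ∫⁻ η in S1, (ENNReal.ofReal ‖η‖) ^ (-(5:ℝ)/2) :=
        lintegral_const_mul' _ _ hc_ne
      _ ≤ (ENNReal.ofReal (t/2)) ^ (-(5:ℝ)/2) * (κ * ENNReal.ofReal (2 * (t/2) ^ ((1:ℝ)/2))) :=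
        mul_le_mul_right (ball_int ht2) _
      _ = κ * ENNReal.ofReal (8 * t ^ (-(2:ℝ))) := hcombine
  -- Term 3
  have hS3m : MeasurableSet ((S1 ∪ S2)ᶜ) := (measurableSet_ball.union measurableSet_ball).compl
  have hb3 : ∫⁻ η in (S1 ∪ S2)ᶜ, f η ≤ κ * ENNReal.ofReal (64 * t ^ (-(2:ℝ))) := by
    have hpoint : ∀ η ∈ (S1 ∪ S2)ᶜ, f η ≤ ENNReal.ofReal 32 * (ENNReal.ofReal ‖η‖) ^ (-(5:ℝ)) := by
      intro η hη
      rw [mem_compl_iff, mem_union, not_or] at hη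
      obtain ⟨h1, h2⟩ := hη
      have hn1 : t/2 ≤ ‖η‖ := not_lt.1 (fun h => h1 (mem_ball_zero_iff.2 h))
      have hn2 : t/2 ≤ ‖ξ - η‖ := by
        by_contra h
        exact h2 (by rw [hS2def, mem_ball, dist_eq_norm, norm_sub_rev]; exact lt_of_not_ge h)
      have hpos : 0 < ‖η‖ := lt_of_lt_of_le ht2 hn1
      have hq : ‖η‖/4 ≤ ‖ξ - η‖ := by
        rcases le_or_gt ‖η‖ (2*t) with h | h
        · linarith
        · have h3 := norm_sub_norm_le η ξ
          rw [norm_sub_rev] at h3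
          linarith
      calc f η ≤ (ENNReal.ofReal (‖η‖/4)) ^ (-(5:ℝ)/2) * (ENNReal.ofReal ‖η‖) ^ (-(5:ℝ)/2) :=
            mul_le_mul_left (rpow_anti (by norm_num) (ENNReal.ofReal_le_ofReal hq)) _
        _ = ENNReal.ofReal ((‖η‖/4) ^ (-(5:ℝ)/2) * ‖η‖ ^ (-(5:ℝ)/2)) := by
            rw [ENNReal.ofReal_rpow_of_pos (by positivity), ENNReal.ofReal_rpow_of_pos hpos,
              ← ENNReal.ofReal_mul (by positivity)]
        _ = ENNReal.ofReal (32 * ‖η‖ ^ (-(5:ℝ))) := by rw [rcalc3 hpos]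
        _ = ENNReal.ofReal 32 * (ENNReal.ofReal ‖η‖) ^ (-(5:ℝ)) := by
            rw [ENNReal.ofReal_mul (by norm_num), ENNReal.ofReal_rpow_of_pos hpos]
    calc ∫⁻ η in (S1 ∪ S2)ᶜ, f η
        ≤ ∫⁻ η in (S1 ∪ S2)ᶜ, ENNReal.ofReal 32 * (ENNReal.ofReal ‖η‖) ^ (-(5:ℝ)) := by
          refine lintegral_mono_ae ?_
          filter_upwards [ae_restrict_mem hS3m] with η hη using hpoint η hη
      _ ≤ ∫⁻ η in S1ᶜ, ENNReal.ofReal 32 * (ENNReal.ofReal ‖η‖) ^ (-(5:ℝ)) :=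
          lintegral_mono_set (compl_subset_compl.2 subset_union_left)
      _ = ENNReal.ofReal 32 * ∫⁻ η in S1ᶜ, (ENNReal.ofReal ‖η‖) ^ (-(5:ℝ)) :=
          lintegral_const_mul' _ _ ENNReal.ofReal_ne_top
      _ ≤ ENNReal.ofReal 32 * (κ * ENNReal.ofReal ((t/2) ^ (-(2:ℝ)) / 2)) :=
          mul_le_mul_right (compl_int ht2) _
      _ = κ * ENNReal.ofReal (64 * t ^ (-(2:ℝ))) := by
          rw [← mul_assoc, mul_comm (ENNReal.ofReal 32) κ, mul_assoc,
            ← ENNReal.ofReal_mul (by norm_num), rcalc4 ht]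
  -- combine
  calc ∫⁻ η, f η = ∫⁻ η in (S1 ∪ S2) ∪ (S1 ∪ S2)ᶜ, f η := by
        rw [union_compl_self, Measure.restrict_univ]
    _ ≤ (∫⁻ η in S1 ∪ S2, f η) + ∫⁻ η in (S1 ∪ S2)ᶜ, f η := lintegral_union_le _ _ _
    _ ≤ ((∫⁻ η in S1, f η) + ∫⁻ η in S2, f η) + ∫⁻ η in (S1 ∪ S2)ᶜ, f η :=
        add_le_add_left (lintegral_union_le _ _ _) _
    _ ≤ (κ * ENNReal.ofReal (8 * t ^ (-(2:ℝ))) + κ * ENNReal.ofReal (8 * t ^ (-(2:ℝ))))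
          + κ * ENNReal.ofReal (64 * t ^ (-(2:ℝ))) := add_le_add (add_le_add hb1 hb2) hb3
    _ = ENNReal.ofReal 80 * κ * (ENNReal.ofReal t) ^ (-(2:ℝ)) := by
        rw [← mul_add, ← mul_add, ← ENNReal.ofReal_add (by positivity) (by positivity),
          ← ENNReal.ofReal_add (by positivity) (by positivity),
          show (8:ℝ) * t ^ (-(2:ℝ)) + 8 * t ^ (-(2:ℝ)) + 64 * t ^ (-(2:ℝ))
            = 80 * t ^ (-(2:ℝ)) by ring,
          ENNReal.ofReal_mul (by norm_num), ENNReal.ofReal_rpow_of_pos ht]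
        ring

end LJSAux

set_option maxHeartbeats 1000000 in
open LJSAux in
theorem leJan_Sznitman_local_bilinear_estimate :
    ∃ C : ℝ≥0, 0 < C ∧
      ∀ Z V : EuclideanSpace ℝ (Fin 3) → ℝ≥0∞, Measurable Z → Measurable V →
        essSup (fun ξ : EuclideanSpace ℝ (Fin 3) =>
            ENNReal.ofReal (‖ξ‖ ^ ((5 : ℝ) / 2)) *
              ((ENNReal.ofReal (‖ξ‖ ^ ((1 : ℝ) / 2)))⁻¹ * ∫⁻ η, Z (ξ - η) * V η)) volume
          ≤ C * essSup (fun ξ : EuclideanSpace ℝ (Fin 3) =>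
                ENNReal.ofReal (‖ξ‖ ^ ((5 : ℝ) / 2)) * Z ξ) volume
              * essSup (fun ξ : EuclideanSpace ℝ (Fin 3) =>
                ENNReal.ofReal (‖ξ‖ ^ ((5 : ℝ) / 2)) * V ξ) volume := by
  classical
  set C0 : ℝ≥0∞ := ENNReal.ofReal 80 * κ with hC0
  have hC0top : C0 ≠ ∞ := ENNReal.mul_ne_top ENNReal.ofReal_ne_top kappa_ne_top
  refine ⟨C0.toNNReal + 1, add_pos_of_nonneg_of_pos zero_le one_pos, ?_⟩
  intro Z V hZ hV
  set A := essSup (fun ξ : EuclideanSpace ℝ (Fin 3) =>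
    ENNReal.ofReal (‖ξ‖ ^ ((5 : ℝ) / 2)) * Z ξ) volume with hA
  set B := essSup (fun ξ : EuclideanSpace ℝ (Fin 3) =>
    ENNReal.ofReal (‖ξ‖ ^ ((5 : ℝ) / 2)) * V ξ) volume with hB
  have hCle : C0 ≤ ((C0.toNNReal + 1 : ℝ≥0) : ℝ≥0∞) := by
    rw [ENNReal.coe_add, ENNReal.coe_toNNReal hC0top]
    exact le_self_add
  have hZae : ∀ᵐ x : EuclideanSpace ℝ (Fin 3), ENNReal.ofReal (‖x‖ ^ ((5 : ℝ) / 2)) * Z x ≤ A := ae_le_essSup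
  have hVae : ∀ᵐ x : EuclideanSpace ℝ (Fin 3), ENNReal.ofReal (‖x‖ ^ ((5 : ℝ) / 2)) * V x ≤ B := ae_le_essSup
  have hvol_ne : (volume : Measure (EuclideanSpace ℝ (Fin 3))) ≠ 0 := by
    intro h
    have hpos := measure_ball_pos (volume : Measure (EuclideanSpace ℝ (Fin 3))) (0 : EuclideanSpace ℝ (Fin 3)) one_pos
    rw [h] at hpos
    simp at hpos
  have main : ∀ᵐ ξ : EuclideanSpace ℝ (Fin 3),
      ENNReal.ofReal (‖ξ‖ ^ ((5 : ℝ) / 2)) *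
        ((ENNReal.ofReal (‖ξ‖ ^ ((1 : ℝ) / 2)))⁻¹ * ∫⁻ η, Z (ξ - η) * V η)
      ≤ C0 * A * B := by
    filter_upwards [(Set.countable_singleton (0 : EuclideanSpace ℝ (Fin 3))).ae_notMem volume] with ξ hξ'
    have hξ : ξ ≠ 0 := fun h => hξ' (by simp [h])
    have ht : 0 < ‖ξ‖ := norm_pos_iff.2 hξ
    have hZ2 : ∀ᵐ η : EuclideanSpace ℝ (Fin 3), ENNReal.ofReal (‖ξ - η‖ ^ ((5 : ℝ) / 2)) * Z (ξ - η) ≤ A :=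
      (Measure.measurePreserving_sub_left volume ξ).quasiMeasurePreserving.tendsto_ae.eventually
        hZae
    have hme : ∀ᵐ η : EuclideanSpace ℝ (Fin 3), η ≠ 0 := by
      filter_upwards [(Set.countable_singleton (0 : EuclideanSpace ℝ (Fin 3))).ae_notMem volume] with η h
      exact fun he => h (by simp [he])
    have hme2 : ∀ᵐ η : EuclideanSpace ℝ (Fin 3), ξ - η ≠ 0 := by
      filter_upwards [(Set.countable_singleton ξ).ae_notMem volume] with η h
      intro he
      exact h (by simp [(sub_eq_zero.1 he).symm])
    have hkm : Measurable fun η : EuclideanSpace ℝ (Fin 3) =>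
        (ENNReal.ofReal ‖ξ - η‖) ^ (-(5:ℝ)/2) * (ENNReal.ofReal ‖η‖) ^ (-(5:ℝ)/2) :=
      (ENNReal.continuous_rpow_const.measurable.comp
        (ENNReal.measurable_ofReal.comp (measurable_const.sub measurable_id).norm)).mul
        (meas_radial _)
    have hint : (∫⁻ η, Z (ξ - η) * V η) ≤ A * B * (C0 * (ENNReal.ofReal ‖ξ‖) ^ (-(2:ℝ))) := by
      calc ∫⁻ η, Z (ξ - η) * V η
          ≤ ∫⁻ η, (A * B) *
            ((ENNReal.ofReal ‖ξ - η‖) ^ (-(5:ℝ)/2) * (ENNReal.ofReal ‖η‖) ^ (-(5:ℝ)/2)) := by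
            refine lintegral_mono_ae ?_
            filter_upwards [hZ2, hVae, hme, hme2] with η h1 h2 h3 h4
            have hpη : 0 < ‖η‖ := norm_pos_iff.2 h3
            have hpd : 0 < ‖ξ - η‖ := norm_pos_iff.2 h4
            have e1 : Z (ξ - η) ≤ (ENNReal.ofReal ‖ξ - η‖) ^ (-(5:ℝ)/2) * A := by
              have h5 := le_inv_mul_of_mul_le
                (a := ENNReal.ofReal (‖ξ - η‖ ^ ((5 : ℝ) / 2)))
                (by rw [Ne, ENNReal.ofReal_eq_zero, not_le]; positivity)
                ENNReal.ofReal_ne_top h1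
              rwa [← ENNReal.ofReal_rpow_of_pos hpd, ← ENNReal.rpow_neg,
                show -((5:ℝ)/2) = -(5:ℝ)/2 by norm_num] at h5
            have e2 : V η ≤ (ENNReal.ofReal ‖η‖) ^ (-(5:ℝ)/2) * B := by
              have h5 := le_inv_mul_of_mul_le
                (a := ENNReal.ofReal (‖η‖ ^ ((5 : ℝ) / 2)))
                (by rw [Ne, ENNReal.ofReal_eq_zero, not_le]; positivity)
                ENNReal.ofReal_ne_top h2
              rwa [← ENNReal.ofReal_rpow_of_pos hpη, ← ENNReal.rpow_neg,
                show -((5:ℝ)/2) = -(5:ℝ)/2 by norm_num] at h5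
            calc Z (ξ - η) * V η
                ≤ ((ENNReal.ofReal ‖ξ - η‖) ^ (-(5:ℝ)/2) * A) *
                  ((ENNReal.ofReal ‖η‖) ^ (-(5:ℝ)/2) * B) := mul_le_mul' e1 e2
              _ = (A * B) * ((ENNReal.ofReal ‖ξ - η‖) ^ (-(5:ℝ)/2) *
                  (ENNReal.ofReal ‖η‖) ^ (-(5:ℝ)/2)) := by ring
        _ = (A * B) * ∫⁻ η,
            (ENNReal.ofReal ‖ξ - η‖) ^ (-(5:ℝ)/2) * (ENNReal.ofReal ‖η‖) ^ (-(5:ℝ)/2) :=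
            lintegral_const_mul _ hkm
        _ ≤ (A * B) * (ENNReal.ofReal 80 * κ * (ENNReal.ofReal ‖ξ‖) ^ (-(2:ℝ))) :=
            mul_le_mul_right (kernel hξ) _
        _ = A * B * (C0 * (ENNReal.ofReal ‖ξ‖) ^ (-(2:ℝ))) := by rw [hC0, mul_assoc]
    have hs0 : (ENNReal.ofReal ‖ξ‖) ≠ 0 := by
      rw [Ne, ENNReal.ofReal_eq_zero, not_le]; exact ht
    have hstop : (ENNReal.ofReal ‖ξ‖) ≠ ∞ := ENNReal.ofReal_ne_top
    calc ENNReal.ofReal (‖ξ‖ ^ ((5 : ℝ) / 2)) *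
          ((ENNReal.ofReal (‖ξ‖ ^ ((1 : ℝ) / 2)))⁻¹ * ∫⁻ η, Z (ξ - η) * V η)
        = (ENNReal.ofReal ‖ξ‖) ^ ((5:ℝ)/2) *
          ((ENNReal.ofReal ‖ξ‖) ^ (-((1:ℝ)/2)) * ∫⁻ η, Z (ξ - η) * V η) := by
          rw [← ENNReal.ofReal_rpow_of_pos ht, ← ENNReal.ofReal_rpow_of_pos ht,
            ← ENNReal.rpow_neg]
      _ ≤ (ENNReal.ofReal ‖ξ‖) ^ ((5:ℝ)/2) * ((ENNReal.ofReal ‖ξ‖) ^ (-((1:ℝ)/2)) *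
          (A * B * (C0 * (ENNReal.ofReal ‖ξ‖) ^ (-(2:ℝ))))) :=
          mul_le_mul_right (mul_le_mul_right hint _) _
      _ = (C0 * A * B) * ((ENNReal.ofReal ‖ξ‖) ^ ((5:ℝ)/2) *
          (ENNReal.ofReal ‖ξ‖) ^ (-((1:ℝ)/2)) * (ENNReal.ofReal ‖ξ‖) ^ (-(2:ℝ))) := by ring
      _ = C0 * A * B := by
          rw [← ENNReal.rpow_add _ _ hs0 hstop, ← ENNReal.rpow_add _ _ hs0 hstop,
            show ((5:ℝ)/2 + -((1:ℝ)/2) + -(2:ℝ)) = 0 by norm_num, ENNReal.rpow_zero, mul_one]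
  calc essSup (fun ξ : EuclideanSpace ℝ (Fin 3) =>
        ENNReal.ofReal (‖ξ‖ ^ ((5 : ℝ) / 2)) *
          ((ENNReal.ofReal (‖ξ‖ ^ ((1 : ℝ) / 2)))⁻¹ * ∫⁻ η, Z (ξ - η) * V η)) volume
      ≤ essSup (fun _ : EuclideanSpace ℝ (Fin 3) => C0 * A * B) volume := essSup_mono_ae main
    _ = C0 * A * B := essSup_const _ hvol_ne
    _ ≤ ((C0.toNNReal + 1 : ℝ≥0) : ℝ≥0∞) * A * B :=
        mul_le_mul_left (mul_le_mul_left hCle A) B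
end
end

section
/- Let g, k : ℝᵈ → ℝ with |g(x)| ≤ k(x) for all x, where k is integrable, radial, and radially non-increasing (k(x) = k₀(|x|) with k₀ non-increasing). Then for every locally integrable f and every x, |(g ∗ f)(x)| ≤ ‖k‖_{L¹} · M_f(x), where M_f is the Hardy–Littlewood maximal function M_f(x) = sup_{r>0} (1/|B(x,r)|) ∫_{B(x,r)} |f(y)| dy. -/
open MeasureTheory Set
open scoped ENNReal

theorem convolution_le_maximal_of_radial_decreasing
    (d : ℕ) (g k : EuclideanSpace ℝ (Fin d) → ℝ)
    (hk_int : Integrable k)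
    (hgk : ∀ x, |g x| ≤ k x)
    (k₀ : ℝ → ℝ) (hk_rad : ∀ x, k x = k₀ ‖x‖)
    (hk₀ : AntitoneOn k₀ (Set.Ici (0 : ℝ)))
    (f : EuclideanSpace ℝ (Fin d) → ℝ) (hf : LocallyIntegrable f volume) :
    ∀ x : EuclideanSpace ℝ (Fin d),
      (∫⁻ y, ENNReal.ofReal |g (x - y)| * ENNReal.ofReal |f y|) ≤
        (∫⁻ y, ENNReal.ofReal (k y)) *
          ⨆ (r : ℝ) (_ : 0 < r),
            (volume (Metric.ball x r))⁻¹ *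
              ∫⁻ y in Metric.ball x r, ENNReal.ofReal |f y| := by
  intro x
  classical
  set F : EuclideanSpace ℝ (Fin d) → ℝ≥0∞ := fun y => ENNReal.ofReal |f y| with hFdef
  set M : ℝ≥0∞ := ⨆ (r : ℝ) (_ : 0 < r),
      (volume (Metric.ball x r))⁻¹ * ∫⁻ y in Metric.ball x r, F y with hMdef
  have hk0 : ∀ z, 0 ≤ k z := fun z => (abs_nonneg _).trans (hgk z)
  -- a globally antitone version of `k₀`
  set k₁ : ℝ → ℝ := fun s => k₀ (max s 0) with hk₁def
  have hk₁anti : Antitone k₁ := fun a b hab =>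
    hk₀ (mem_Ici.2 (le_max_right _ _)) (mem_Ici.2 (le_max_right _ _)) (max_le_max hab le_rfl)
  have hk_eq : ∀ z : EuclideanSpace ℝ (Fin d), k z = k₁ ‖z‖ := fun z => by
    rw [hk_rad z]; simp [hk₁def, max_eq_left (norm_nonneg z)]
  have hk_meas : Measurable k := by
    have : k = fun z => k₁ ‖z‖ := funext hk_eq
    rw [this]; exact hk₁anti.measurable.comp measurable_norm
  have hFmeas : AEMeasurable F volume := by
    have habs : AEMeasurable (fun y => |f y|) volume := by
      simpa [Real.norm_eq_abs] using hf.aestronglyMeasurable.norm.aemeasurable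
    exact habs.ennreal_ofReal
  -- maximal function bound on open balls
  have lemA : ∀ r : ℝ, 0 < r →
      ∫⁻ y in Metric.ball x r, F y ≤ volume (Metric.ball x r) * M := by
    intro r hr
    have h0 : volume (Metric.ball x r) ≠ 0 := (Metric.measure_ball_pos volume x hr).ne'
    have htop : volume (Metric.ball x r) ≠ ∞ := measure_ball_lt_top.ne
    have hle : (volume (Metric.ball x r))⁻¹ * ∫⁻ y in Metric.ball x r, F y ≤ M := by
      rw [hMdef]
      exact le_iSup₂ (f := fun (r : ℝ) (_ : 0 < r) =>
        (volume (Metric.ball x r))⁻¹ * ∫⁻ y in Metric.ball x r, F y) r hr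
    calc ∫⁻ y in Metric.ball x r, F y
        = volume (Metric.ball x r) *
            ((volume (Metric.ball x r))⁻¹ * ∫⁻ y in Metric.ball x r, F y) := by
          rw [← mul_assoc, ENNReal.mul_inv_cancel h0 htop, one_mul]
      _ ≤ volume (Metric.ball x r) * M := mul_le_mul_right hle _
  rcases Nat.eq_zero_or_pos d with rfl | hd
  · -- degenerate case `d = 0`
    haveI : Subsingleton (EuclideanSpace ℝ (Fin 0)) := inferInstance
    have huniv : volume (univ : Set (EuclideanSpace ℝ (Fin 0))) = 1 := by
      have h := (EuclideanSpace.volume_preserving_symm_measurableEquiv_toLp (Fin 0)).measure_preimage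
        (s := univ) (by simp)
      simpa [volume_pi, Measure.pi_univ] using h
    have hxy : ∀ y : EuclideanSpace ℝ (Fin 0), y = x := fun y => Subsingleton.elim _ _
    have hLHS : (∫⁻ y, ENNReal.ofReal |g (x - y)| * F y)
        = ENNReal.ofReal |g (x - x)| * ENNReal.ofReal |f x| := by
      have : (fun y => ENNReal.ofReal |g (x - y)| * F y)
          = fun _ => ENNReal.ofReal |g (x - x)| * ENNReal.ofReal |f x| := by
        funext y; rw [hxy y]
      rw [this, lintegral_const, huniv, mul_one]
    have hK : (∫⁻ y, ENNReal.ofReal (k y)) = ENNReal.ofReal (k x) := by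
      have : (fun y : EuclideanSpace ℝ (Fin 0) => ENNReal.ofReal (k y))
          = fun _ => ENNReal.ofReal (k x) := by funext y; rw [hxy y]
      rw [this, lintegral_const, huniv, mul_one]
    have hMge : ENNReal.ofReal |f x| ≤ M := by
      have hball : Metric.ball x 1 = (univ : Set (EuclideanSpace ℝ (Fin 0))) := by
        ext y; simp [Metric.mem_ball, hxy y]
      have hint : ∫⁻ y in Metric.ball x 1, F y = ENNReal.ofReal |f x| := by
        rw [hball]
        have : F = fun _ => ENNReal.ofReal |f x| := by funext y; rw [hFdef]; simp [hxy y]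
        rw [Measure.restrict_univ, this, lintegral_const, huniv, mul_one]
      have h1 : (volume (Metric.ball x 1))⁻¹ * ∫⁻ y in Metric.ball x 1, F y
          = ENNReal.ofReal |f x| := by
        rw [hint, hball, huniv]; simp
      rw [hMdef, ← h1]
      exact le_iSup₂ (f := fun (r : ℝ) (_ : 0 < r) =>
        (volume (Metric.ball x r))⁻¹ * ∫⁻ y in Metric.ball x r, F y) 1 one_pos
    rw [hLHS, hK]
    calc ENNReal.ofReal |g (x - x)| * ENNReal.ofReal |f x|
        ≤ ENNReal.ofReal (k x) * ENNReal.ofReal |f x| := by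
          have : x - x = x := Subsingleton.elim _ _
          rw [this]
          exact mul_le_mul_left (ENNReal.ofReal_le_ofReal (hgk x)) _
      _ ≤ ENNReal.ofReal (k x) * M := mul_le_mul_right hMge _
  · -- main case `d ≥ 1`
    haveI hnt : Nontrivial (EuclideanSpace ℝ (Fin d)) :=
      Module.nontrivial_of_finrank_pos (R := ℝ) (by rw [finrank_euclideanSpace_fin]; omega)
    set μF : Measure (EuclideanSpace ℝ (Fin d)) := volume.withDensity F with hμF
    have hkx_meas : Measurable fun y : EuclideanSpace ℝ (Fin d) => k (x - y) :=
      hk_meas.comp (measurable_const.sub measurable_id)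
    have hkint_top : (∫⁻ z, ENNReal.ofReal (k z)) < ∞ := hk_int.lintegral_lt_top
    -- layer cake for the measure `μF`
    have step2 : (∫⁻ y, ENNReal.ofReal (k (x - y)) * F y)
        = ∫⁻ y, ENNReal.ofReal (k (x - y)) ∂μF := by
      rw [hμF, lintegral_withDensity_eq_lintegral_mul₀ hFmeas
        hkx_meas.aemeasurable.ennreal_ofReal]
      exact lintegral_congr fun y => (mul_comm _ _)
    have step3 : (∫⁻ y, ENNReal.ofReal (k (x - y)) ∂μF)
        = ∫⁻ t in Ioi (0 : ℝ), μF {y | t < k (x - y)} := by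
      exact lintegral_eq_lintegral_meas_lt μF (ae_of_all _ fun y => hk0 _)
        hkx_meas.aemeasurable
    -- pointwise bound for the layers
    have step4 : ∀ t : ℝ, 0 < t →
        μF {y | t < k (x - y)} ≤ volume {z | t < k z} * M := by
      intro t ht
      set S : Set (EuclideanSpace ℝ (Fin d)) := {z | t < k z} with hS
      set A : Set (EuclideanSpace ℝ (Fin d)) := {y | t < k (x - y)} with hA
      have hAmeas : MeasurableSet A := measurableSet_lt measurable_const hkx_meas
      have hμFA : μF A = ∫⁻ y in A, F y := withDensity_apply F hAmeas
      -- `S` has finite measure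
      have hSfin : volume S ≠ ∞ := by
        intro hcon
        have hsub : S ⊆ {z | ENNReal.ofReal t ≤ ENNReal.ofReal (k z)} := fun z hz =>
          ENNReal.ofReal_le_ofReal (le_of_lt hz)
        have := mul_meas_ge_le_lintegral₀ (μ := volume)
          (f := fun z => ENNReal.ofReal (k z)) hk_meas.aemeasurable.ennreal_ofReal
          (ENNReal.ofReal t)
        have hmono : volume S ≤ volume {z | ENNReal.ofReal t ≤ ENNReal.ofReal (k z)} :=
          measure_mono hsub
        rw [hcon] at hmono
        have hTopS : volume {z | ENNReal.ofReal t ≤ ENNReal.ofReal (k z)} = ∞ :=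
          top_le_iff.mp hmono
        rw [hTopS, ENNReal.mul_top (ENNReal.ofReal_pos.2 ht).ne'] at this
        exact absurd (top_le_iff.mp this) hkint_top.ne
      rcases eq_empty_or_nonempty S with hSe | ⟨z₀, hz₀⟩
      · have hAe : A = ∅ :=
          eq_empty_of_forall_notMem fun y hy =>
            (eq_empty_iff_forall_notMem.1 hSe) (x - y) hy
        rw [hAe]
        simp
      · -- the radii set
        set T : Set ℝ := {s : ℝ | 0 ≤ s ∧ t < k₁ s} with hT
        have hzT : ‖z₀‖ ∈ T := ⟨norm_nonneg _, by rw [← hk_eq]; exact hz₀⟩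
        have hTbdd : BddAbove T := by
          by_contra hb
          have hSuniv : S = univ := by
            ext z
            simp only [hS, mem_setOf_eq, mem_univ, iff_true]
            obtain ⟨s, hsT, hzs⟩ := not_bddAbove_iff.1 hb ‖z‖
            calc t < k₁ s := hsT.2
              _ ≤ k₁ ‖z‖ := hk₁anti hzs.le
              _ = k z := (hk_eq z).symm
          rw [hSuniv, measure_univ_of_isAddLeftInvariant] at hSfin
          exact hSfin rfl
        set r : ℝ := sSup T with hr
        have hr0 : 0 ≤ r := le_trans (norm_nonneg z₀) (le_csSup hTbdd hzT)
        have hS_sub : S ⊆ Metric.closedBall 0 r := fun z hz => by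
          rw [Metric.mem_closedBall, dist_zero_right]
          exact le_csSup hTbdd ⟨norm_nonneg z, by rw [← hk_eq]; exact hz⟩
        have hball_sub : Metric.ball 0 r ⊆ S := fun z hz => by
          rw [Metric.mem_ball, dist_zero_right] at hz
          obtain ⟨s, hsT, hzs⟩ := exists_lt_of_lt_csSup ⟨‖z₀‖, hzT⟩ hz
          show t < k z
          calc t < k₁ s := hsT.2
            _ ≤ k₁ ‖z‖ := hk₁anti hzs.le
            _ = k z := (hk_eq z).symm
        have hA_sub : A ⊆ Metric.closedBall x r := fun y hy => by
          rw [Metric.mem_closedBall, dist_eq_norm, ← norm_sub_rev]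
          have : x - y ∈ S := hy
          have := hS_sub this
          rwa [Metric.mem_closedBall, dist_zero_right] at this
        have hsph : volume (Metric.sphere x r) = 0 := Measure.addHaar_sphere volume x r
        have hcbae : (Metric.closedBall x r : Set _) =ᵐ[volume] Metric.ball x r := by
          rw [Filter.eventuallyEq_set]
          have : {y | y ∈ Metric.closedBall x r ↔ y ∈ Metric.ball x r}ᶜ ⊆
              Metric.sphere x r := by
            intro y hy
            simp only [mem_compl_iff, mem_setOf_eq, not_iff] at hy
            by_cases h1 : y ∈ Metric.closedBall x r
            · have h2 : y ∉ Metric.ball x r := by tauto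
              have := mem_diff_of_mem h1 h2
              rwa [Metric.closedBall_diff_ball] at this
            · exact absurd (Metric.ball_subset_closedBall (by tauto)) h1
          exact Filter.eventually_of_mem (U := {y | y ∈ Metric.closedBall x r ↔ y ∈ Metric.ball x r})
            (by
              rw [mem_ae_iff]
              exact measure_mono_null (by simpa using this) hsph)
            fun y hy => hy
        calc μF A = ∫⁻ y in A, F y := hμFA
          _ ≤ ∫⁻ y in Metric.closedBall x r, F y := lintegral_mono_set hA_sub
          _ = ∫⁻ y in Metric.ball x r, F y := setLIntegral_congr hcbae
          _ ≤ volume {z | t < k z} * M := by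
            rcases hr0.lt_or_eq with hrpos | hrz
            · calc ∫⁻ y in Metric.ball x r, F y
                  ≤ volume (Metric.ball x r) * M := lemA r hrpos
                _ = volume (Metric.ball (0 : EuclideanSpace ℝ (Fin d)) r) * M := by
                    rw [Measure.addHaar_ball_center volume x r]
                _ ≤ volume S * M :=
                    mul_le_mul_left (measure_mono (μ := volume) hball_sub) M
            · rw [← hrz, Metric.ball_zero]
              simp
    -- put everything together
    calc (∫⁻ y, ENNReal.ofReal |g (x - y)| * F y)
        ≤ ∫⁻ y, ENNReal.ofReal (k (x - y)) * F y :=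
          lintegral_mono fun y => mul_le_mul_left (ENNReal.ofReal_le_ofReal (hgk _)) _
      _ = ∫⁻ t in Ioi (0 : ℝ), μF {y | t < k (x - y)} := by rw [step2, step3]
      _ ≤ ∫⁻ t in Ioi (0 : ℝ), volume {z | t < k z} * M := by
          refine lintegral_mono_ae ?_
          filter_upwards [ae_restrict_mem measurableSet_Ioi] with t ht
          exact step4 t ht
      _ = (∫⁻ t in Ioi (0 : ℝ), volume {z | t < k z}) * M := by
          have hanti : Antitone fun t : ℝ => volume {z | t < k z} := fun a b hab =>
            measure_mono fun z hz => lt_of_le_of_lt hab hz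
          exact lintegral_mul_const M hanti.measurable
      _ = (∫⁻ y, ENNReal.ofReal (k y)) * M := by
          rw [← lintegral_eq_lintegral_meas_lt volume (ae_of_all _ hk0)
            hk_meas.aemeasurable]
end

section
/- Let u, v : (0,∞) × ℝ³ → ℝ be measurable and set U(y) = sup_{s>0} |u(s,y)|, V(y) = sup_{s>0} |v(s,y)|. If the bilinear kernel bound |K(t,x−y)| ≤ C (√t + |x−y|)^(−4) holds, then |∫₀ᵗ ∫_{ℝ³} K(t−s, x−y) u(s,y) v(s,y) dy ds| ≤ C' ∫_{ℝ³} |x−y|^(−2) U(y) V(y) dy for all t > 0, x ∈ ℝ³, where C' depends only on C (using ∫₀^∞ (√σ + |x−y|)^(−4) dσ = c |x−y|^(−2)). -/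
open MeasureTheory Set
open scoped ENNReal

variable {α : Type*} [MeasurableSpace α] {μ : MeasureTheory.Measure α}

lemma lint_iUnion' {ι : Type*} [Countable ι] {s : ι → Set α} (hd : Pairwise (Function.onFun Disjoint s))
    (hm : ∀ i, MeasurableSet (s i)) (f : α → ℝ≥0∞) :
    ∫⁻ a in ⋃ i, s i, f a ∂μ = ∑' i, ∫⁻ a in s i, f a ∂μ := by
  rw [Measure.restrict_iUnion hd hm, lintegral_sum_measure]

lemma isup_min_nat (x : ℝ≥0∞) : ⨆ n : ℕ, min x (n : ℝ≥0∞) = x := by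
  apply le_antisymm (iSup_le fun n => min_le_left _ _)
  rcases eq_or_ne x ⊤ with rfl | hx
  · rw [top_le_iff]
    apply le_antisymm le_top
    calc (⊤ : ℝ≥0∞) = ⨆ n : ℕ, (n : ℝ≥0∞) := (ENNReal.iSup_natCast).symm
      _ ≤ _ := iSup_mono fun n => by simp
  · obtain ⟨n, hn⟩ := ENNReal.exists_nat_gt hx
    exact le_iSup_of_le n (by simp [hn.le])

lemma lint_trunc (f : α → ℝ≥0∞) : ∫⁻ a, f a ∂μ = ⨆ n : ℕ, ∫⁻ a, min (f a) n ∂μ := by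
  apply le_antisymm
  · rw [lintegral_def]
    refine iSup₂_le fun φ hφ => ?_
    have h1 : φ.lintegral μ = ∫⁻ a, φ a ∂μ := (SimpleFunc.lintegral_eq_lintegral φ μ).symm
    rw [h1]
    have h2 : ∫⁻ a, φ a ∂μ = ⨆ n : ℕ, ∫⁻ a, min (φ a) n ∂μ := by
      rw [← lintegral_iSup (fun n => φ.measurable.min measurable_const)
        (fun m n hmn => fun a => min_le_min le_rfl (by exact_mod_cast Nat.cast_le.2 hmn))]
      simp_rw [isup_min_nat]
    rw [h2]
    exact iSup_mono fun n => lintegral_mono fun a => min_le_min (hφ a) le_rfl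
  · exact iSup_le fun n => lintegral_mono fun a => min_le_left _ _

lemma exists_envelope [SigmaFinite μ] (W : α → ℝ≥0∞) :
    ∃ f : α → ℝ≥0∞, Measurable f ∧
      ∀ E : Set α, MeasurableSet E → ∫⁻ a in E, f a ∂μ = ∫⁻ a in E, W a ∂μ := by
  set B : ℕ → Set α := disjointed (spanningSets μ) with hB
  have hBm : ∀ k, MeasurableSet (B k) :=
    MeasurableSet.disjointed (measurableSet_spanningSets μ)
  have hBd : Pairwise (Function.onFun Disjoint B) := disjoint_disjointed _
  have hBU : ⋃ k, B k = univ := by rw [hB, iUnion_disjointed, iUnion_spanningSets]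
  set P : ℕ → ℕ → α → ℝ≥0∞ := fun n k => (B k).indicator (fun a => min (W a) n) with hP
  have hPfin : ∀ n k, ∫⁻ a, P n k a ∂μ ≠ ∞ := by
    intro n k
    rw [hP, lintegral_indicator (hBm k)]
    have : ∫⁻ a in B k, min (W a) n ∂μ ≤ ∫⁻ _ in B k, (n : ℝ≥0∞) ∂μ :=
      lintegral_mono fun a => min_le_right _ _
    refine ne_top_of_le_ne_top ?_ this
    rw [setLIntegral_const]
    refine ENNReal.mul_ne_top (by simp) ?_
    exact ((measure_mono (disjointed_subset _ _)).trans_lt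
      (measure_spanningSets_lt_top μ k)).ne
  choose h hm hle hint using fun n k => exists_measurable_le_lintegral_eq μ (P n k)
  -- set-wise equality for each piece
  have S1 : ∀ n k (E : Set α), MeasurableSet E →
      ∫⁻ a in E, h n k a ∂μ = ∫⁻ a in E, P n k a ∂μ := by
    intro n k E hE
    have t1 : ∫⁻ a in E, h n k a ∂μ ≤ ∫⁻ a in E, P n k a ∂μ :=
      lintegral_mono fun a => hle n k a
    have t2 : ∫⁻ a in Eᶜ, h n k a ∂μ ≤ ∫⁻ a in Eᶜ, P n k a ∂μ :=
      lintegral_mono fun a => hle n k a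
    have total : ∫⁻ a in E, P n k a ∂μ + ∫⁻ a in Eᶜ, P n k a ∂μ
        = ∫⁻ a in E, h n k a ∂μ + ∫⁻ a in Eᶜ, h n k a ∂μ := by
      rw [lintegral_add_compl _ hE, lintegral_add_compl _ hE, hint]
    refine le_antisymm t1 ?_
    have hfinEc : ∫⁻ a in Eᶜ, P n k a ∂μ ≠ ∞ := by
      refine ne_top_of_le_ne_top (hPfin n k) (lintegral_mono' Measure.restrict_le_self le_rfl)
    have : ∫⁻ a in E, P n k a ∂μ + ∫⁻ a in Eᶜ, P n k a ∂μ
        ≤ ∫⁻ a in E, h n k a ∂μ + ∫⁻ a in Eᶜ, P n k a ∂μ := by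
      rw [total]; exact add_le_add_right t2 _
    exact (ENNReal.add_le_add_iff_right hfinEc).1 this
  set fseq : ℕ → α → ℝ≥0∞ := fun n a => ∑' k, h n k a with hfseq
  have hfseqm : ∀ n, Measurable (fseq n) := fun n => Measurable.ennreal_tsum (hm n)
  have S2 : ∀ n (E : Set α), MeasurableSet E →
      ∫⁻ a in E, fseq n a ∂μ = ∫⁻ a in E, min (W a) n ∂μ := by
    intro n E hE
    rw [hfseq]
    simp only
    rw [lintegral_tsum (fun k => (hm n k).aemeasurable)]
    have e1 : ∀ k, ∫⁻ a in E, h n k a ∂μ = ∫⁻ a in B k ∩ E, min (W a) n ∂μ := by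
      intro k
      rw [S1 n k E hE, hP]
      simp only
      rw [lintegral_indicator (hBm k), Measure.restrict_restrict (hBm k)]
    simp_rw [e1]
    have key := lint_iUnion' (μ := μ) (s := fun k => B k ∩ E)
      (fun i j hij => Disjoint.mono (inter_subset_left) (inter_subset_left) (hBd hij))
      (fun k => (hBm k).inter hE) (fun a => min (W a) n)
    rw [← key, ← iUnion_inter, hBU, univ_inter]
  -- monotonize
  set g : ℕ → α → ℝ≥0∞ := fun n a => partialSups (fun m => fseq m a) n with hg
  have hgm : ∀ n, Measurable (g n) := by
    intro n
    induction n with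
    | zero => simpa [hg, partialSups_zero] using hfseqm 0
    | succ n ih => simpa [hg, partialSups_succ] using Measurable.max ih (hfseqm (n+1))
  have hfseq_le : ∀ m a, fseq m a ≤ min (W a) m := by
    intro m a
    obtain ⟨k₀, hk₀⟩ : ∃ k, a ∈ B k := by
      have := hBU ▸ mem_univ a; simpa [mem_iUnion] using this
    have : ∀ k, k ≠ k₀ → P m k a = 0 := by
      intro k hk
      have : a ∉ B k := fun ha => (hBd hk).le_bot ⟨ha, hk₀⟩
      simp [hP, indicator_of_notMem this]
    calc fseq m a ≤ ∑' k, P m k a := ENNReal.tsum_le_tsum fun k => hle m k a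
      _ = P m k₀ a := tsum_eq_single k₀ this
      _ ≤ min (W a) m := by
          by_cases ha : a ∈ B k₀ <;>
            simp [hP, indicator_of_mem, indicator_of_notMem, ha]
  have hgle : ∀ n a, g n a ≤ min (W a) n := by
    intro n a
    refine partialSups_le _ _ _ fun m hmn => (hfseq_le m a).trans ?_
    exact min_le_min le_rfl (by exact_mod_cast Nat.cast_le.2 hmn)
  have S3 : ∀ n (E : Set α), MeasurableSet E →
      ∫⁻ a in E, g n a ∂μ = ∫⁻ a in E, min (W a) n ∂μ := by
    intro n E hE
    refine le_antisymm (lintegral_mono fun a => hgle n a) ?_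
    rw [← S2 n E hE]
    exact lintegral_mono fun a => le_partialSups (fun m => fseq m a) n
  refine ⟨fun a => ⨆ n, g n a, Measurable.iSup hgm, fun E hE => ?_⟩
  have hmono : Monotone g := fun m n hmn a => (partialSups _).monotone hmn
  rw [lintegral_iSup hgm hmono]
  simp_rw [fun n => S3 n E hE]
  exact (lint_trunc W).symm

lemma lint_mul_le_of_setLIntegral_le {F₁ F₂ : α → ℝ≥0∞}
    (h : ∀ E : Set α, MeasurableSet E → ∫⁻ a in E, F₁ a ∂μ ≤ ∫⁻ a in E, F₂ a ∂μ)
    {g : α → ℝ≥0∞} (hg : Measurable g) (hgfin : ∀ a, g a ≠ ∞) :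
    ∫⁻ a, g a * F₁ a ∂μ ≤ ∫⁻ a, g a * F₂ a ∂μ := by
  have main : ∀ c : ℝ≥0∞, 1 < c → c ≠ ∞ →
      ∫⁻ a, g a * F₁ a ∂μ ≤ c * ∫⁻ a, g a * F₂ a ∂μ := by
    intro c hc hcT
    have hc0 : c ≠ 0 := (zero_lt_one.trans hc).ne'
    have hczpow : ∀ k : ℤ, c ^ k ≠ ∞ := fun k => (ENNReal.zpow_lt_top hc0 hcT k).ne
    set E : ℤ → Set α := fun k => g ⁻¹' Ico (c ^ k) (c ^ (k + 1)) with hEdef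
    have hEm : ∀ k, MeasurableSet (E k) := fun k => hg measurableSet_Ico
    have hEd : Pairwise (Function.onFun Disjoint E) := by
      intro k l hkl
      refine Set.disjoint_left.2 fun a hak hal => ?_
      rcases lt_or_gt_of_ne hkl with hlt | hlt
      · exact absurd ((hak.2.trans_le (ENNReal.zpow_le_of_le hc.le (by omega))).trans_le hal.1)
          (lt_irrefl _)
      · exact absurd ((hal.2.trans_le (ENNReal.zpow_le_of_le hc.le (by omega))).trans_le hak.1)
          (lt_irrefl _)
    have hUnion : ∀ a, g a ≠ 0 → a ∈ ⋃ k, E k := by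
      intro a ha
      obtain ⟨k, hk⟩ := ENNReal.exists_mem_Ico_zpow ha (hgfin a) hc hcT
      exact mem_iUnion.2 ⟨k, hk⟩
    have hind : ∀ (F : α → ℝ≥0∞) a,
        g a * F a = (⋃ k, E k).indicator (fun a => g a * F a) a := by
      intro F a
      by_cases ha : a ∈ ⋃ k, E k
      · rw [indicator_of_mem ha]
      · have : g a = 0 := by
          by_contra h0
          exact ha (hUnion a h0)
        rw [indicator_of_notMem ha, this, zero_mul]
    have hUm : MeasurableSet (⋃ k, E k) := MeasurableSet.iUnion hEm
    calc ∫⁻ a, g a * F₁ a ∂μ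
        = ∫⁻ a in ⋃ k, E k, g a * F₁ a ∂μ := by
          rw [lintegral_congr (hind F₁), lintegral_indicator hUm]
      _ = ∑' k, ∫⁻ a in E k, g a * F₁ a ∂μ := lint_iUnion' hEd hEm _
      _ ≤ ∑' k, c ^ (k + 1) * ∫⁻ a in E k, F₁ a ∂μ := by
          refine ENNReal.tsum_le_tsum fun k => ?_
          rw [← lintegral_const_mul' _ _ (hczpow (k+1))]
          refine lintegral_mono_ae ?_
          filter_upwards [ae_restrict_mem (hEm k)] with a ha
          exact mul_le_mul_left ha.2.le _
      _ ≤ ∑' k, c ^ (k + 1) * ∫⁻ a in E k, F₂ a ∂μ :=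
          ENNReal.tsum_le_tsum fun k => mul_le_mul_right (h (E k) (hEm k)) _
      _ ≤ ∑' k, c * ∫⁻ a in E k, g a * F₂ a ∂μ := by
          refine ENNReal.tsum_le_tsum fun k => ?_
          have h1 : c ^ (k + 1) = c * c ^ k := by
            rw [ENNReal.zpow_add hc0 hcT k 1, zpow_one, mul_comm]
          rw [h1, mul_assoc]
          refine mul_le_mul_right ?_ c
          rw [← lintegral_const_mul' _ _ (hczpow k)]
          refine lintegral_mono_ae ?_
          filter_upwards [ae_restrict_mem (hEm k)] with a ha
          exact mul_le_mul_left ha.1 _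
      _ = c * ∫⁻ a in ⋃ k, E k, g a * F₂ a ∂μ := by
          rw [ENNReal.tsum_mul_left, lint_iUnion' hEd hEm]
      _ ≤ c * ∫⁻ a, g a * F₂ a ∂μ :=
          mul_le_mul_right (lintegral_mono' Measure.restrict_le_self le_rfl) _
  by_cases hB : ∫⁻ a, g a * F₂ a ∂μ = ∞
  · rw [hB]; exact le_top
  refine ENNReal.le_of_forall_pos_le_add fun ε hε hB' => ?_
  set B := ∫⁻ a, g a * F₂ a ∂μ with hBdef
  have hB1 : B + 1 ≠ 0 := by simp
  have hB1T : B + 1 ≠ ∞ := by simp [hB]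
  have hd0 : (ε : ℝ≥0∞) / (B + 1) ≠ 0 :=
    (ENNReal.div_pos (by exact_mod_cast hε.ne') hB1T).ne'
  have hc : 1 < 1 + (ε : ℝ≥0∞) / (B + 1) :=
    ENNReal.lt_add_right ENNReal.one_ne_top hd0
  have hcT : 1 + (ε : ℝ≥0∞) / (B + 1) ≠ ∞ := by
    refine ENNReal.add_ne_top.2 ⟨ENNReal.one_ne_top, ?_⟩
    exact (ENNReal.div_lt_top ENNReal.coe_ne_top hB1).ne
  calc ∫⁻ a, g a * F₁ a ∂μ ≤ (1 + (ε : ℝ≥0∞) / (B + 1)) * B := main _ hc hcT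
    _ = B + (ε : ℝ≥0∞) / (B + 1) * B := by rw [add_mul, one_mul]
    _ ≤ B + (ε : ℝ≥0∞) / (B + 1) * (B + 1) := by
        exact add_le_add_right (mul_le_mul_right le_self_add _) _
    _ = B + ε := by rw [ENNReal.div_mul_cancel hB1 hB1T]

-- helper: rpow with negative nat exponent as inverse of pow, for nonneg base
lemma rpow_neg_nat_eq_inv_pow {r : ℝ} (hr : 0 ≤ r) {n : ℕ} (hn : n ≠ 0) :
    r ^ (-(n : ℝ)) = (r ^ n)⁻¹ := by
  rcases hr.eq_or_lt with rfl | hr'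
  · rw [Real.zero_rpow (by simpa using hn), zero_pow hn, inv_zero]
  · rw [← Real.rpow_natCast r n, ← Real.rpow_neg hr]

lemma time_integral_bound (t : ℝ) (ht : 0 < t) (d : ℝ) (hd : 0 < d) :
    ∫⁻ s in Set.Ioo (0:ℝ) t,
      ENNReal.ofReal (((Real.sqrt (t - s) + d) ^ (4:ℕ))⁻¹)
      ≤ ENNReal.ofReal 2 * ENNReal.ofReal ((d ^ (2:ℕ))⁻¹) := by
  -- change of variables σ = t - s
  have hpres : MeasurePreserving (fun s : ℝ => t - s) volume volume :=
    Measure.measurePreserving_sub_left volume t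
  have hemb : MeasurableEmbedding (fun s : ℝ => t - s) :=
    (MeasurableEquiv.subLeft t).measurableEmbedding
  have himg : (fun s : ℝ => t - s) '' Set.Ioo 0 t = Set.Ioo 0 t := by
    rw [Set.image_const_sub_Ioo]; simp
  have hF : Measurable fun σ : ℝ => ENNReal.ofReal (((Real.sqrt σ + d) ^ (4:ℕ))⁻¹) := by
    refine Measurable.ennreal_ofReal ?_
    exact (((Real.continuous_sqrt.add continuous_const).pow 4).measurable).inv
  have step1 : ∫⁻ s in Set.Ioo (0:ℝ) t,
      ENNReal.ofReal (((Real.sqrt (t - s) + d) ^ (4:ℕ))⁻¹)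
      = ∫⁻ σ in Set.Ioo (0:ℝ) t, ENNReal.ofReal (((Real.sqrt σ + d) ^ (4:ℕ))⁻¹) := by
    have := hpres.setLIntegral_comp_emb hemb
      (fun σ => ENNReal.ofReal (((Real.sqrt σ + d) ^ (4:ℕ))⁻¹)) (Set.Ioo 0 t)
    rw [this, himg]
  rw [step1]
  set G : ℝ → ℝ≥0∞ := fun σ => ENNReal.ofReal (min ((σ ^ (2:ℕ))⁻¹) ((d ^ (4:ℕ))⁻¹)) with hG
  have step2 : ∫⁻ σ in Set.Ioo (0:ℝ) t, ENNReal.ofReal (((Real.sqrt σ + d) ^ (4:ℕ))⁻¹)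
      ≤ ∫⁻ σ in Set.Ioi (0:ℝ), G σ := by
    refine le_trans ?_
      (lintegral_mono' (μ := volume.restrict (Set.Ioo (0:ℝ) t))
        (Measure.restrict_mono Set.Ioo_subset_Ioi_self le_rfl) (le_rfl (a := G)))
    refine lintegral_mono_ae ?_
    filter_upwards [ae_restrict_mem measurableSet_Ioo] with σ hσ
    refine ENNReal.ofReal_le_ofReal (le_min ?_ ?_)
    · have h1 : (0:ℝ) < σ ^ (2:ℕ) := pow_pos hσ.1 2
      have h2 : σ ^ (2:ℕ) ≤ (Real.sqrt σ + d) ^ (4:ℕ) := by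
        have : σ ^ (2:ℕ) = (Real.sqrt σ) ^ (4:ℕ) := by
          rw [show (4:ℕ) = 2*2 from rfl, pow_mul, Real.sq_sqrt hσ.1.le]
        rw [this]
        exact pow_le_pow_left₀ (Real.sqrt_nonneg σ) (by linarith) 4
      exact inv_anti₀ h1 h2
    · have h1 : (0:ℝ) < d ^ (4:ℕ) := pow_pos hd 4
      have h2 : d ^ (4:ℕ) ≤ (Real.sqrt σ + d) ^ (4:ℕ) :=
        pow_le_pow_left₀ hd.le (by nlinarith [Real.sqrt_nonneg σ]) 4
      exact inv_anti₀ h1 h2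
  refine step2.trans ?_
  have hsplit : Set.Ioi (0:ℝ) = Set.Ioc 0 (d^(2:ℕ)) ∪ Set.Ioi (d^(2:ℕ)) :=
    (Set.Ioc_union_Ioi_eq_Ioi (by positivity)).symm
  have step3 : ∫⁻ σ in Set.Ioi (0:ℝ), G σ
      ≤ (∫⁻ σ in Set.Ioc (0:ℝ) (d^(2:ℕ)), G σ) + ∫⁻ σ in Set.Ioi (d^(2:ℕ)), G σ := by
    rw [hsplit]
    exact (lintegral_mono' (Measure.restrict_union_le _ _) le_rfl).trans
      (le_of_eq (lintegral_add_measure _ _ _))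
  refine step3.trans ?_
  have piece1 : ∫⁻ σ in Set.Ioc (0:ℝ) (d^(2:ℕ)), G σ ≤ ENNReal.ofReal ((d ^ (2:ℕ))⁻¹) := by
    calc ∫⁻ σ in Set.Ioc (0:ℝ) (d^(2:ℕ)), G σ
        ≤ ∫⁻ _ in Set.Ioc (0:ℝ) (d^(2:ℕ)), ENNReal.ofReal ((d ^ (4:ℕ))⁻¹) :=
          lintegral_mono fun σ => ENNReal.ofReal_le_ofReal (min_le_right _ _)
      _ = ENNReal.ofReal ((d ^ (4:ℕ))⁻¹) * volume (Set.Ioc (0:ℝ) (d^(2:ℕ))) :=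
          setLIntegral_const _ _
      _ = ENNReal.ofReal ((d ^ (4:ℕ))⁻¹) * ENNReal.ofReal (d^(2:ℕ)) := by
          rw [Real.volume_Ioc, sub_zero]
      _ = ENNReal.ofReal ((d ^ (4:ℕ))⁻¹ * d^(2:ℕ)) := by
          rw [ENNReal.ofReal_mul (by positivity)]
      _ = ENNReal.ofReal ((d ^ (2:ℕ))⁻¹) := by
          congr 1
          field_simp
  have piece2 : ∫⁻ σ in Set.Ioi (d^(2:ℕ)), G σ ≤ ENNReal.ofReal ((d ^ (2:ℕ))⁻¹) := by
    have hd2 : (0:ℝ) < d^(2:ℕ) := by positivity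
    have hb : ∫⁻ σ in Set.Ioi (d^(2:ℕ)), G σ
        ≤ ∫⁻ σ in Set.Ioi (d^(2:ℕ)), ENNReal.ofReal (σ ^ (-(2:ℝ))) := by
      refine lintegral_mono_ae ?_
      filter_upwards [ae_restrict_mem measurableSet_Ioi] with σ hσ
      have hσ0 : (0:ℝ) < σ := hd2.trans hσ
      refine ENNReal.ofReal_le_ofReal ?_
      rw [show (-(2:ℝ)) = -((2:ℕ):ℝ) by norm_num,
        rpow_neg_nat_eq_inv_pow hσ0.le (by norm_num : (2:ℕ) ≠ 0)]
      exact min_le_left _ _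
    refine hb.trans ?_
    have hint : IntegrableOn (fun σ : ℝ => σ ^ (-(2:ℝ))) (Set.Ioi (d^(2:ℕ))) :=
      integrableOn_Ioi_rpow_of_lt (by norm_num) hd2
    have hnn : 0 ≤ᵐ[volume.restrict (Set.Ioi (d^(2:ℕ)))] fun σ : ℝ => σ ^ (-(2:ℝ)) := by
      filter_upwards [ae_restrict_mem measurableSet_Ioi] with σ hσ
      exact Real.rpow_nonneg (hd2.trans hσ).le _
    rw [← ofReal_integral_eq_lintegral_ofReal hint hnn]
    refine ENNReal.ofReal_le_ofReal ?_
    rw [integral_Ioi_rpow_of_lt (by norm_num) hd2,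
      show (-2 + 1 : ℝ) = -1 by norm_num, Real.rpow_neg_one]
    norm_num
  calc (∫⁻ σ in Set.Ioc (0:ℝ) (d^(2:ℕ)), G σ) + ∫⁻ σ in Set.Ioi (d^(2:ℕ)), G σ
      ≤ ENNReal.ofReal ((d ^ (2:ℕ))⁻¹) + ENNReal.ofReal ((d ^ (2:ℕ))⁻¹) :=
        add_le_add piece1 piece2
    _ = ENNReal.ofReal 2 * ENNReal.ofReal ((d ^ (2:ℕ))⁻¹) := by
        rw [← ENNReal.ofReal_add (by positivity) (by positivity),
          ← ENNReal.ofReal_mul (by norm_num)]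
        norm_num [two_mul]

noncomputable section

theorem bilinear_kernel_dominated_by_riesz (C : ℝ) (hC : 0 < C) :
    ∃ C' : ℝ, 0 < C' ∧
      ∀ (K : ℝ → EuclideanSpace ℝ (Fin 3) → ℝ)
        (u v : ℝ → EuclideanSpace ℝ (Fin 3) → ℝ),
        (∀ t : ℝ, 0 < t → ∀ z, |K t z| ≤ C * (Real.sqrt t + ‖z‖) ^ (-(4 : ℝ))) →
        ∀ t : ℝ, 0 < t → ∀ x : EuclideanSpace ℝ (Fin 3),
          (∫⁻ s in Set.Ioo (0 : ℝ) t, ∫⁻ y,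
              ENNReal.ofReal |K (t - s) (x - y)| *
                (ENNReal.ofReal |u s y| * ENNReal.ofReal |v s y|))
            ≤ ENNReal.ofReal C' *
                ∫⁻ y, ENNReal.ofReal (‖x - y‖ ^ (-(2 : ℝ))) *
                  ((⨆ (s : ℝ) (_ : 0 < s), ENNReal.ofReal |u s y|) *
                    ⨆ (s : ℝ) (_ : 0 < s), ENNReal.ofReal |v s y|) := by
  refine ⟨2 * C, by linarith, ?_⟩
  intro K u v hK t ht x
  -- the product of sup functions
  set W : EuclideanSpace ℝ (Fin 3) → ℝ≥0∞ := fun y =>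
    (⨆ (s : ℝ) (_ : 0 < s), ENNReal.ofReal |u s y|) *
      ⨆ (s : ℝ) (_ : 0 < s), ENNReal.ofReal |v s y| with hWdef
  obtain ⟨f, hfm, hfE⟩ := exists_envelope (μ := (volume : Measure (EuclideanSpace ℝ (Fin 3)))) W
  -- the measurable kernel majorant
  set a : ℝ × EuclideanSpace ℝ (Fin 3) → ℝ≥0∞ := fun p =>
    ENNReal.ofReal (C * ((Real.sqrt (t - p.1) + ‖x - p.2‖) ^ (4:ℕ))⁻¹) with hadef
  have ham : Measurable a := by
    refine Measurable.ennreal_ofReal (measurable_const.mul ?_)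
    refine Measurable.inv (Measurable.pow_const ?_ 4)
    exact ((Real.continuous_sqrt.comp (continuous_const.sub continuous_fst)).add
      ((continuous_const.sub continuous_snd).norm)).measurable
  -- the Riesz weight (inverse-power form)
  set g0 : EuclideanSpace ℝ (Fin 3) → ℝ≥0∞ := fun y =>
    ENNReal.ofReal ((‖x - y‖ ^ (2:ℕ))⁻¹) with hg0def
  have hg0m : Measurable g0 := by
    refine Measurable.ennreal_ofReal (Measurable.inv (Measurable.pow_const ?_ 2))
    exact (continuous_const.sub continuous_id).norm.measurable
  calc ∫⁻ s in Set.Ioo (0 : ℝ) t, ∫⁻ y,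
        ENNReal.ofReal |K (t - s) (x - y)| *
          (ENNReal.ofReal |u s y| * ENNReal.ofReal |v s y|)
      ≤ ∫⁻ s in Set.Ioo (0 : ℝ) t, ∫⁻ y, a (s, y) * f y := by
        refine lintegral_mono_ae ?_
        filter_upwards [ae_restrict_mem measurableSet_Ioo] with s hs
        have pt : ∀ y, ENNReal.ofReal |K (t - s) (x - y)| *
            (ENNReal.ofReal |u s y| * ENNReal.ofReal |v s y|) ≤ a (s, y) * W y := by
          intro y
          refine mul_le_mul' ?_ ?_
          · refine ENNReal.ofReal_le_ofReal ?_
            have hts : 0 < t - s := by linarith [hs.2]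
            have := hK (t - s) hts (x - y)
            rwa [show (-(4:ℝ)) = -((4:ℕ):ℝ) by norm_num,
              rpow_neg_nat_eq_inv_pow (by positivity) (by norm_num : (4:ℕ) ≠ 0)] at this
          · exact mul_le_mul'
              (le_iSup₂ (f := fun (s : ℝ) (_ : 0 < s) => ENNReal.ofReal |u s y|) s hs.1)
              (le_iSup₂ (f := fun (s : ℝ) (_ : 0 < s) => ENNReal.ofReal |v s y|) s hs.1)
        calc ∫⁻ y, ENNReal.ofReal |K (t - s) (x - y)| *
              (ENNReal.ofReal |u s y| * ENNReal.ofReal |v s y|)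
            ≤ ∫⁻ y, a (s, y) * W y := lintegral_mono pt
          _ ≤ ∫⁻ y, a (s, y) * f y := by
              refine lint_mul_le_of_setLIntegral_le (fun E hE => (hfE E hE).ge)
                (ham.comp measurable_prodMk_left) (fun y => ENNReal.ofReal_ne_top)
    _ = ∫⁻ y, ∫⁻ s in Set.Ioo (0 : ℝ) t, a (s, y) * f y := by
        refine lintegral_lintegral_swap ?_
        exact (ham.mul (hfm.comp measurable_snd)).aemeasurable
    _ = ∫⁻ y, (∫⁻ s in Set.Ioo (0 : ℝ) t, a (s, y)) * f y := by
        refine lintegral_congr fun y => ?_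
        exact lintegral_mul_const _ (ham.comp (measurable_id.prodMk measurable_const))
    _ ≤ ∫⁻ y, (ENNReal.ofReal (2 * C) * g0 y) * f y := by
        refine lintegral_mono_ae ?_
        have hne : ∀ᵐ (y : EuclideanSpace ℝ (Fin 3)), y ≠ x := by
          refine ae_iff.2 ?_
          have : {y : EuclideanSpace ℝ (Fin 3) | ¬ y ≠ x} = {x} := by
            ext y; simp
          rw [this, measure_singleton]
        filter_upwards [hne] with y hy
        refine mul_le_mul_left ?_ (f y)
        set d : ℝ := ‖x - y‖ with hd
        have hdpos : 0 < d := by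
          rw [hd, norm_pos_iff]
          exact sub_ne_zero.2 (Ne.symm hy)
        calc ∫⁻ s in Set.Ioo (0 : ℝ) t, a (s, y)
            = ENNReal.ofReal C * ∫⁻ s in Set.Ioo (0 : ℝ) t,
                ENNReal.ofReal (((Real.sqrt (t - s) + d) ^ (4:ℕ))⁻¹) := by
              rw [← lintegral_const_mul' _ _ ENNReal.ofReal_ne_top]
              refine lintegral_congr fun s => ?_
              rw [hadef]
              simp only
              rw [← ENNReal.ofReal_mul hC.le]
          _ ≤ ENNReal.ofReal C * (ENNReal.ofReal 2 * ENNReal.ofReal ((d ^ (2:ℕ))⁻¹)) :=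
              mul_le_mul_right (time_integral_bound t ht d hdpos) _
          _ = ENNReal.ofReal (2 * C) * g0 y := by
              rw [hg0def]
              simp only [← hd]
              rw [← mul_assoc, ← ENNReal.ofReal_mul hC.le, mul_comm C 2]
    _ = ENNReal.ofReal (2 * C) * ∫⁻ y, g0 y * f y := by
        simp_rw [mul_assoc]
        exact lintegral_const_mul' _ _ ENNReal.ofReal_ne_top
    _ ≤ ENNReal.ofReal (2 * C) * ∫⁻ y, g0 y * W y := by
        refine mul_le_mul_right ?_ _
        exact lint_mul_le_of_setLIntegral_le (fun E hE => (hfE E hE).le) hg0m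
          (fun y => ENNReal.ofReal_ne_top)
    _ = ENNReal.ofReal (2 * C) *
          ∫⁻ y, ENNReal.ofReal (‖x - y‖ ^ (-(2 : ℝ))) *
            ((⨆ (s : ℝ) (_ : 0 < s), ENNReal.ofReal |u s y|) *
              ⨆ (s : ℝ) (_ : 0 < s), ENNReal.ofReal |v s y|) := by
        refine congrArg _ (lintegral_congr fun y => ?_)
        rw [hg0def, hWdef]
        simp only
        rw [show (-(2:ℝ)) = -((2:ℕ):ℝ) by norm_num,
          rpow_neg_nat_eq_inv_pow (norm_nonneg _) (by norm_num : (2:ℕ) ≠ 0)]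

end
end

section
/- The function m : ℝ × ℝ³ → ℂ, m(τ,ξ) = −|ξ|²/(|ξ|² + iτ) (defined for (τ,ξ) ≠ (0,0)), satisfies the parabolic Marcinkiewicz conditions: for every α ∈ ℕ₀³ and β ∈ ℕ₀, sup_{(τ,ξ)≠(0,0)} (|τ|^(1/2) + |ξ|)^(|α| + 2β) |∂_ξ^α ∂_τ^β m(τ,ξ)| < ∞. -/
noncomputable section

/-- Iterated partial derivatives on `ℝ × ℝ³`: `none` stands for a `∂_τ` derivative,
`some i` for a `∂_{ξ_i}` derivative. -/
def parabolicDeriv :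
    List (Option (Fin 3)) → ((ℝ × EuclideanSpace ℝ (Fin 3)) → ℂ) →
      ((ℝ × EuclideanSpace ℝ (Fin 3)) → ℂ)
  | [], g => g
  | (none :: L), g => fun p => fderiv ℝ (parabolicDeriv L g) p (1, 0)
  | (some i :: L), g => fun p =>
      fderiv ℝ (parabolicDeriv L g) p (0, EuclideanSpace.single i 1)

/-- Parabolic weight of a list of derivatives: `τ`-derivatives count for `2`,
`ξ`-derivatives for `1`. -/
def parabolicWeight (L : List (Option (Fin 3))) : ℕ :=
  (L.map fun o => match o with | none => 2 | some _ => 1).sum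

/-- The maximal-regularity symbol `m(τ,ξ) = -|ξ|²/(|ξ|² + iτ)`. -/
def maxRegSymbol (p : ℝ × EuclideanSpace ℝ (Fin 3)) : ℂ :=
  -((‖p.2‖ ^ 2 : ℝ) : ℂ) / (((‖p.2‖ ^ 2 : ℝ) : ℂ) + Complex.I * (p.1 : ℂ))

abbrev Esp := EuclideanSpace ℝ (Fin 3)

def Sc (l : ℝ) : (ℝ × Esp) →L[ℝ] (ℝ × Esp) :=
  ((l ^ 2) • ContinuousLinearMap.id ℝ ℝ).prodMap (l • ContinuousLinearMap.id ℝ Esp)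

lemma Sc_apply (l : ℝ) (p : ℝ × Esp) : Sc l p = (l ^ 2 * p.1, l • p.2) := rfl

lemma Sc_ne_zero {l : ℝ} (hl : 0 < l) {p : ℝ × Esp} (hp : p ≠ 0) : Sc l p ≠ 0 := by
  intro h
  apply hp
  rw [Sc_apply, Prod.ext_iff] at h
  have h1 : p.1 = 0 := by
    have h' : l ^ 2 * p.1 = 0 := h.1
    rcases mul_eq_zero.mp h' with h'' | h''
    · exact absurd h'' (by positivity)
    · exact h''
  have h2 : p.2 = 0 := by
    have h' : l • p.2 = (0 : Esp) := h.2
    rwa [smul_eq_zero_iff_right hl.ne'] at h'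
  exact Prod.ext_iff.mpr ⟨h1, h2⟩

lemma denom_ne {p : ℝ × Esp} (hp : p ≠ 0) :
    ((‖p.2‖ ^ 2 : ℝ) : ℂ) + Complex.I * (p.1 : ℂ) ≠ 0 := by
  intro h
  apply hp
  simp only [Complex.ext_iff, Complex.add_re, Complex.add_im, Complex.mul_re, Complex.mul_im,
    Complex.I_re, Complex.I_im, Complex.ofReal_re, Complex.ofReal_im, Complex.zero_re,
    Complex.zero_im] at h
  simp at h
  exact Prod.ext_iff.mpr ⟨h.2, by simpa [pow_eq_zero_iff] using h.1⟩

lemma smooth_base {p : ℝ × Esp} (hp : p ≠ 0) : ContDiffAt ℝ ⊤ maxRegSymbol p := by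
  have h1 : ContDiffAt ℝ ⊤ (fun q : ℝ × Esp => ((‖q.2‖ ^ 2 : ℝ) : ℂ)) p :=
    Complex.ofRealCLM.contDiff.contDiffAt.comp p
      (((contDiff_norm_sq ℝ).comp contDiff_snd).contDiffAt)
  have h2 : ContDiffAt ℝ ⊤ (fun q : ℝ × Esp => Complex.I * (q.1 : ℂ)) p :=
    (contDiffAt_const.mul (Complex.ofRealCLM.contDiff.contDiffAt.comp p contDiff_fst.contDiffAt))
  show ContDiffAt ℝ ⊤
    (fun q : ℝ × Esp =>
      -((‖q.2‖ ^ 2 : ℝ) : ℂ) / (((‖q.2‖ ^ 2 : ℝ) : ℂ) + Complex.I * (q.1 : ℂ))) p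
  simp only [div_eq_mul_inv]
  exact h1.neg.mul ((h1.add h2).inv (denom_ne hp))

lemma base_homog {l : ℝ} (hl : 0 < l) {p : ℝ × Esp} (hp : p ≠ 0) :
    maxRegSymbol (Sc l p) = maxRegSymbol p := by
  have hn : ((‖(Sc l p).2‖ ^ 2 : ℝ) : ℂ) = (l ^ 2 : ℝ) * ((‖p.2‖ ^ 2 : ℝ) : ℂ) := by
    rw [Sc_apply]
    push_cast
    rw [norm_smul]
    simp [abs_of_pos hl]
    ring
  have hτ : (((Sc l p).1 : ℝ) : ℂ) = (l ^ 2 : ℝ) * (p.1 : ℂ) := by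
    rw [Sc_apply]; push_cast; ring
  have hl2 : ((l ^ 2 : ℝ) : ℂ) ≠ 0 := by
    simp [pow_eq_zero_iff]; exact hl.ne'
  have hd2 := denom_ne hp
  have hd1 : ((‖(Sc l p).2‖ ^ 2 : ℝ) : ℂ) + Complex.I * ((Sc l p).1 : ℂ) ≠ 0 :=
    denom_ne (Sc_ne_zero hl hp)
  unfold maxRegSymbol
  rw [div_eq_div_iff hd1 hd2, hn, hτ]
  ring

lemma smooth_deriv (L : List (Option (Fin 3))) {p : ℝ × Esp} (hp : p ≠ 0) :
    ContDiffAt ℝ ⊤ (parabolicDeriv L maxRegSymbol) p := by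
  induction L generalizing p with
  | nil => exact smooth_base hp
  | cons o L ih =>
    have h : ContDiffAt ℝ ⊤ (fderiv ℝ (parabolicDeriv L maxRegSymbol)) p :=
      (ih hp).fderiv_right le_top
    cases o with
    | none => exact h.clm_apply contDiffAt_const
    | some i => exact h.clm_apply contDiffAt_const

lemma homog (L : List (Option (Fin 3))) {l : ℝ} (hl : 0 < l) {p : ℝ × Esp} (hp : p ≠ 0) :
    (l ^ parabolicWeight L) • parabolicDeriv L maxRegSymbol (Sc l p) =
      parabolicDeriv L maxRegSymbol p := by
  induction L generalizing p with
  | nil =>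
    simp only [parabolicDeriv, parabolicWeight, List.map_nil, List.sum_nil, pow_zero, one_smul]
    exact base_homog hl hp
  | cons o L ih =>
    set g := parabolicDeriv L maxRegSymbol with hg
    set w := parabolicWeight L with hw
    have hU : IsOpen {q : ℝ × Esp | q ≠ 0} := isOpen_compl_singleton
    have hSp : Sc l p ≠ 0 := Sc_ne_zero hl hp
    have hdiffS : DifferentiableAt ℝ g (Sc l p) :=
      (smooth_deriv L hSp).differentiableAt (by simp)
    have hdiffp : DifferentiableAt ℝ g p :=
      (smooth_deriv L hp).differentiableAt (by simp)
    have hcompdiff : DifferentiableAt ℝ (g ∘ (Sc l)) p :=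
      hdiffS.comp p (Sc l).differentiableAt
    -- g agrees with l^w • (g ∘ Sc l) near p
    have hev : g =ᶠ[nhds p] fun q => (l ^ w) • (g ∘ (Sc l)) q := by
      refine Filter.eventuallyEq_of_mem (hU.mem_nhds hp) ?_
      intro q hq
      exact (ih hq).symm
    have hfd : fderiv ℝ g p = (l ^ w) • fderiv ℝ (g ∘ (Sc l)) p := by
      rw [hev.fderiv_eq, fderiv_fun_const_smul hcompdiff]
    have hfd2 : fderiv ℝ (g ∘ (Sc l)) p = (fderiv ℝ g (Sc l p)).comp (Sc l) := by
      rw [fderiv_comp p hdiffS (Sc l).differentiableAt, (Sc l).fderiv]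
    cases o with
    | none =>
      show (l ^ parabolicWeight (none :: L)) • fderiv ℝ g (Sc l p) (1, 0) = fderiv ℝ g p (1, 0)
      have hv : Sc l ((1 : ℝ), (0 : Esp)) = (l ^ 2) • ((1 : ℝ), (0 : Esp)) := by
        rw [Sc_apply]; simp [Prod.smul_def]
      have hwgt : parabolicWeight (none :: L) = 2 + w := by
        simp [parabolicWeight, hw, parabolicWeight]
      rw [hfd, hfd2]
      simp only [ContinuousLinearMap.smul_apply, ContinuousLinearMap.coe_comp',
        Function.comp_apply, hv, map_smul]
      rw [hwgt, smul_smul]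
      congr 1
      rw [pow_add]
      ring
    | some i =>
      show (l ^ parabolicWeight (some i :: L)) •
          fderiv ℝ g (Sc l p) (0, EuclideanSpace.single i 1) =
        fderiv ℝ g p (0, EuclideanSpace.single i 1)
      have hv : Sc l ((0 : ℝ), EuclideanSpace.single i (1 : ℝ)) =
          l • ((0 : ℝ), EuclideanSpace.single i (1 : ℝ)) := by
        rw [Sc_apply]; simp [Prod.smul_def]
      have hwgt : parabolicWeight (some i :: L) = 1 + w := by
        simp [parabolicWeight, hw, parabolicWeight]
      rw [hfd, hfd2]
      simp only [ContinuousLinearMap.smul_apply, ContinuousLinearMap.coe_comp',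
        Function.comp_apply, hv, map_smul]
      rw [hwgt, smul_smul]
      congr 1
      rw [pow_add]
      ring

theorem maxRegSymbol_parabolic_marcinkiewicz :
    ∀ L : List (Option (Fin 3)), ∃ C : ℝ,
      ∀ p : ℝ × EuclideanSpace ℝ (Fin 3), p ≠ 0 →
        (Real.sqrt |p.1| + ‖p.2‖) ^ parabolicWeight L *
          ‖parabolicDeriv L maxRegSymbol p‖ ≤ C := by
  intro L
  set g := parabolicDeriv L maxRegSymbol with hg
  set w := parabolicWeight L with hw
  set K : Set (ℝ × Esp) := {q | Real.sqrt |q.1| + ‖q.2‖ = 1} with hK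
  have hKne : ∀ q ∈ K, q ≠ 0 := by
    intro q hq h0
    rw [h0] at hq
    simp [hK] at hq
  have hKclosed : IsClosed K := by
    have : Continuous fun q : ℝ × Esp => Real.sqrt |q.1| + ‖q.2‖ :=
      (Real.continuous_sqrt.comp (continuous_abs.comp continuous_fst)).add
        (continuous_norm.comp continuous_snd)
    exact isClosed_eq this continuous_const
  have hKsub : K ⊆ Metric.closedBall 0 1 := by
    intro q hq
    have hq' : Real.sqrt |q.1| + ‖q.2‖ = 1 := hq
    have h2 : ‖q.2‖ ≤ 1 := by nlinarith [Real.sqrt_nonneg |q.1|, norm_nonneg q.2]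
    have hs : Real.sqrt |q.1| ≤ 1 := by nlinarith [norm_nonneg q.2]
    have h1 : |q.1| ≤ 1 := by
      nlinarith [Real.sq_sqrt (abs_nonneg q.1), Real.sqrt_nonneg |q.1|]
    rw [Metric.mem_closedBall, dist_zero_right]
    rw [Prod.norm_def]
    exact max_le (by simpa [Real.norm_eq_abs] using h1) h2
  have hKcompact : IsCompact K :=
    (isCompact_closedBall (0 : ℝ × Esp) 1).of_isClosed_subset hKclosed hKsub
  have hcont : ContinuousOn (fun q => ‖g q‖) K := fun q hq =>
    ((smooth_deriv L (hKne q hq)).continuousAt.norm).continuousWithinAt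
  obtain ⟨C, hC⟩ := hKcompact.exists_bound_of_continuousOn hcont
  refine ⟨C, fun p hp => ?_⟩
  set r := Real.sqrt |p.1| + ‖p.2‖ with hr
  have hr0 : 0 < r := by
    rcases lt_or_eq_of_le (add_nonneg (Real.sqrt_nonneg |p.1|) (norm_nonneg p.2)) with h | h
    · exact h
    · exfalso
      apply hp
      have h1 : Real.sqrt |p.1| = 0 ∧ ‖p.2‖ = 0 := by
        constructor <;> nlinarith [Real.sqrt_nonneg |p.1|, norm_nonneg p.2]
      have hp1 : p.1 = 0 := by
        have := h1.1
        rw [Real.sqrt_eq_zero (abs_nonneg p.1)] at this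
        exact abs_eq_zero.mp this
      exact Prod.ext_iff.mpr ⟨hp1, norm_eq_zero.mp h1.2⟩
  set l := r⁻¹ with hl
  have hl0 : 0 < l := inv_pos.mpr hr0
  have hmem : Sc l p ∈ K := by
    show Real.sqrt |(Sc l p).1| + ‖(Sc l p).2‖ = 1
    rw [Sc_apply]
    have : |l ^ 2 * p.1| = l ^ 2 * |p.1| := by
      rw [abs_mul, abs_of_pos (by positivity : (0:ℝ) < l ^ 2)]
    rw [this, Real.sqrt_mul (by positivity) _, Real.sqrt_sq hl0.le, norm_smul,
      Real.norm_eq_abs, abs_of_pos hl0]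
    rw [← mul_add, hl]
    exact inv_mul_cancel₀ hr0.ne'
  have hhom : l ^ w • g (Sc l p) = g p := homog L hl0 hp
  have hnorm : ‖g p‖ = l ^ w * ‖g (Sc l p)‖ := by
    rw [← hhom, norm_smul, Real.norm_eq_abs, abs_of_pos (by positivity)]
  have hbound : ‖g (Sc l p)‖ ≤ C := by
    have := hC _ hmem
    rwa [norm_norm] at this
  calc r ^ w * ‖g p‖ = r ^ w * (l ^ w * ‖g (Sc l p)‖) := by rw [hnorm]
    _ = (r * l) ^ w * ‖g (Sc l p)‖ := by rw [mul_pow]; ring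
    _ = ‖g (Sc l p)‖ := by rw [hl, mul_inv_cancel₀ hr0.ne', one_pow, one_mul]
    _ ≤ C := hbound
end
end
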